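/- arXiv:1406.3801 — 2 statements merged into one kernel-verified Lean document; each statement's English description precedes it below -/
import Mathlib

section
/- For every nonnegative integer n, the number of overpartitions satisfies p̄(n) ≡ (-1)^n · p̄(4n) (mod 8). -/
/-- The number of overpartitions of `n`: pairs `(λ, μ)` where `λ` is a partition of some
`m ≤ n` into distinct parts and `μ` is an ordinary partition of `n - m`. -/
def overpartition (n : ℕ) : ℕ :=
  ∑ m ∈ Finset.range (n + 1),
    (Nat.Partition.distincts m).card * Fintype.card (Nat.Partition (n - m))


open PowerSeries

namespace Theorems100

noncomputable section

variable {α : Type*}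

open Finset

open scoped Classical

/-- The partial product for the generating function for odd partitions.
TODO: As `m` tends to infinity, this converges (in the `X`-adic topology).

If `m` is sufficiently large, the `i`th coefficient gives the number of odd partitions of the
natural number `i`: proved in `oddGF_prop`.
It is stated for an arbitrary field `α`, though it usually suffices to use `ℚ` or `ℝ`.
-/
def partialOddGF (m : ℕ) [Field α] :=
  ∏ i ∈ range m, (1 - (X : PowerSeries α) ^ (2 * i + 1))⁻¹

/-- The partial product for the generating function for distinct partitions.
TODO: As `m` tends to infinity, this converges (in the `X`-adic topology).

If `m` is sufficiently large, the `i`th coefficient gives the number of distinct partitions of the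
natural number `i`: proved in `distinctGF_prop`.
It is stated for an arbitrary commutative semiring `α`, though it usually suffices to use `ℕ`, `ℚ`
or `ℝ`.
-/
def partialDistinctGF (m : ℕ) [CommSemiring α] :=
  ∏ i ∈ range m, (1 + (X : PowerSeries α) ^ (i + 1))

open Finset.HasAntidiagonal

universe u
variable {ι : Type u}

/-- A convenience constructor for the power series whose coefficients indicate a subset. -/
def indicatorSeries (α : Type*) [Semiring α] (s : Set ℕ) : PowerSeries α :=
  PowerSeries.mk fun n => if n ∈ s then 1 else 0

theorem coeff_indicator (s : Set ℕ) [Semiring α] (n : ℕ) :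
    coeff n (indicatorSeries α s) = if n ∈ s then 1 else 0 :=
  coeff_mk _ _

theorem coeff_indicator_pos (s : Set ℕ) [Semiring α] (n : ℕ) (h : n ∈ s) :
    coeff n (indicatorSeries α s) = 1 := by rw [coeff_indicator, if_pos h]

theorem coeff_indicator_neg (s : Set ℕ) [Semiring α] (n : ℕ) (h : n ∉ s) :
    coeff n (indicatorSeries α s) = 0 := by rw [coeff_indicator, if_neg h]

theorem constantCoeff_indicator (s : Set ℕ) [Semiring α] :
    constantCoeff (indicatorSeries α s) = if 0 ∈ s then 1 else 0 :=
  rfl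

theorem two_series (i : ℕ) [Semiring α] :
    1 + (X : PowerSeries α) ^ i.succ = indicatorSeries α {0, i.succ} := by
  ext n
  simp only [coeff_indicator, coeff_one, coeff_X_pow, Set.mem_insert_iff, Set.mem_singleton_iff,
    map_add]
  cases' n with d
  · simp [(Nat.succ_ne_zero i).symm]
  · simp [Nat.succ_ne_zero d]

theorem num_series' [Field α] (i : ℕ) :
    (1 - (X : PowerSeries α) ^ (i + 1))⁻¹ = indicatorSeries α {k | i + 1 ∣ k} := by
  rw [PowerSeries.inv_eq_iff_mul_eq_one]
  · ext n
    cases n with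
    | zero => simp [mul_sub, zero_pow, constantCoeff_indicator]
    | succ n =>
      simp only [coeff_one, if_false, mul_sub, mul_one, coeff_indicator,
        LinearMap.map_sub, reduceCtorEq]
      simp_rw [coeff_mul, coeff_X_pow, coeff_indicator, @boole_mul _ _ _ _]
      erw [@sum_ite _ _ _ _ _ (fun _ => Classical.propDecidable _), sum_ite]
      simp_rw [@filter_filter _ _ _ _ _, sum_const_zero, add_zero, sum_const, nsmul_eq_mul, mul_one,
        sub_eq_iff_eq_add, zero_add]
      symm
      split_ifs with h
      · suffices #{a ∈ antidiagonal (n + 1) | i + 1 ∣ a.fst ∧ a.snd = i + 1} = 1 by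
          simp only [Set.mem_setOf_eq]; convert congr_arg ((↑) : ℕ → α) this; norm_cast
        rw [card_eq_one]
        cases' h with p hp
        refine ⟨((i + 1) * (p - 1), i + 1), ?_⟩
        ext ⟨a₁, a₂⟩
        simp only [mem_filter, Prod.mk.injEq, Finset.HasAntidiagonal.mem_antidiagonal, mem_singleton]
        constructor
        · rintro ⟨a_left, ⟨a, rfl⟩, rfl⟩
          refine ⟨?_, rfl⟩
          rw [Nat.mul_sub_left_distrib, ← hp, ← a_left, mul_one, Nat.add_sub_cancel]
        · rintro ⟨rfl, rfl⟩
          match p with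
          | 0 => rw [mul_zero] at hp; cases hp
          | p + 1 => rw [hp]; simp [mul_add]
      · suffices #{a ∈ antidiagonal (n + 1) | i + 1 ∣ a.fst ∧ a.snd = i + 1} = 0 by
          simp only [Set.mem_setOf_eq]; convert congr_arg ((↑) : ℕ → α) this; norm_cast
        rw [card_eq_zero]
        apply eq_empty_of_forall_notMem
        simp only [Prod.forall, mem_filter, not_and, Finset.HasAntidiagonal.mem_antidiagonal]
        rintro _ h₁ h₂ ⟨a, rfl⟩ rfl
        apply h
        simp [← h₂]
  · simp [zero_pow]

def mkOdd : ℕ ↪ ℕ :=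
  ⟨fun i => 2 * i + 1, fun x y h => by linarith⟩

-- The main workhorse of the partition theorem proof.
theorem partialGF_prop (α : Type*) [CommSemiring α] (n : ℕ) (s : Finset ℕ) (hs : ∀ i ∈ s, 0 < i)
    (c : ℕ → Set ℕ) (hc : ∀ i, i ∉ s → 0 ∈ c i) :
    #{p : n.Partition | (∀ j, p.parts.count j ∈ c j) ∧ ∀ j ∈ p.parts, j ∈ s} =
      coeff n (∏ i ∈ s, indicatorSeries α ((· * i) '' c i)) := by
  simp_rw [coeff_prod, coeff_indicator, prod_boole, sum_boole]
  apply congr_arg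
  simp only [mem_univ, forall_true_left, not_and, not_forall, exists_prop,
    Set.mem_image, not_exists]
  set φ : (a : Nat.Partition n) →
    a ∈ filter (fun p ↦ (∀ (j : ℕ), Multiset.count j p.parts ∈ c j) ∧ ∀ j ∈ p.parts, j ∈ s) univ →
    ℕ →₀ ℕ := fun p _ => {
      toFun := fun i => Multiset.count i p.parts • i
      support := Finset.filter (fun i => i ≠ 0) p.parts.toFinset
      mem_support_toFun := fun a => by
        simp only [smul_eq_mul, ne_eq, mul_eq_zero, Multiset.count_eq_zero]
        rw [not_or, not_not]
        simp only [Multiset.mem_toFinset, not_not, mem_filter] }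
  refine Finset.card_bij φ ?_ ?_ ?_
  · intro a ha
    simp only [φ, not_forall, not_exists, not_and, exists_prop, mem_filter]
    rw [mem_finsuppAntidiag]
    dsimp only [ne_eq, smul_eq_mul, id_eq, eq_mpr_eq_cast, le_eq_subset, Finsupp.coe_mk]
    simp only [mem_univ, forall_true_left, not_and, not_forall, exists_prop,
      mem_filter, true_and] at ha
    refine ⟨⟨?_, fun i ↦ ?_⟩, fun i _ ↦ ⟨a.parts.count i, ha.1 i, rfl⟩⟩
    · conv_rhs => simp [← a.parts_sum]
      rw [sum_multiset_count_of_subset _ s]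
      · simp only [smul_eq_mul]
      · intro i
        simp only [Multiset.mem_toFinset, not_not, mem_filter]
        apply ha.2
    · simp only [ne_eq, Multiset.mem_toFinset, not_not, mem_filter, and_imp]
      exact fun hi _ ↦ ha.2 i hi
  · intro p₁ hp₁ p₂ hp₂ h
    apply Nat.Partition.ext
    simp only [true_and, mem_univ, mem_filter] at hp₁ hp₂
    ext i
    simp only [φ, ne_eq, Multiset.mem_toFinset, not_not, smul_eq_mul, Finsupp.mk.injEq] at h
    by_cases hi : i = 0
    · rw [hi]
      rw [Multiset.count_eq_zero_of_notMem]
      · rw [Multiset.count_eq_zero_of_notMem]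
        intro a; exact Nat.lt_irrefl 0 (hs 0 (hp₂.2 0 a))
      intro a; exact Nat.lt_irrefl 0 (hs 0 (hp₁.2 0 a))
    · rw [← mul_left_inj' hi]
      rw [funext_iff] at h
      exact h.2 i
  · simp only [φ, mem_filter, mem_finsuppAntidiag, mem_univ, exists_prop, true_and, and_assoc]
    rintro f ⟨hf, hf₃, hf₄⟩
    have hf' : f ∈ finsuppAntidiag s n := mem_finsuppAntidiag.mpr ⟨hf, hf₃⟩
    simp only [mem_finsuppAntidiag] at hf'
    refine ⟨⟨∑ i ∈ s, Multiset.replicate (f i / i) i, ?_, ?_⟩, ?_, ?_, ?_⟩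
    · intro i hi
      simp only [exists_prop, Multiset.mem_sum, mem_map, Function.Embedding.coeFn_mk] at hi
      rcases hi with ⟨t, ht, z⟩
      apply hs
      rwa [Multiset.eq_of_mem_replicate z]
    · simp_rw [Multiset.sum_sum, Multiset.sum_replicate, Nat.nsmul_eq_mul]
      rw [← hf'.1]
      refine sum_congr rfl fun i hi => Nat.div_mul_cancel ?_
      rcases hf₄ i hi with ⟨w, _, hw₂⟩
      rw [← hw₂]
      exact dvd_mul_left _ _
    · intro i
      simp_rw [Multiset.count_sum', Multiset.count_replicate, sum_ite_eq']
      split_ifs with h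
      · rcases hf₄ i h with ⟨w, hw₁, hw₂⟩
        rwa [← hw₂, Nat.mul_div_cancel _ (hs i h)]
      · exact hc _ h
    · intro i hi
      rw [Multiset.mem_sum] at hi
      rcases hi with ⟨j, hj₁, hj₂⟩
      rwa [Multiset.eq_of_mem_replicate hj₂]
    · ext i
      simp_rw [Multiset.count_sum', Multiset.count_replicate, sum_ite_eq']
      simp only [ne_eq, Multiset.mem_toFinset, not_not, smul_eq_mul, ite_mul,
        zero_mul, Finsupp.coe_mk]
      split_ifs with h
      · apply Nat.div_mul_cancel
        rcases hf₄ i h with ⟨w, _, hw₂⟩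
        apply Dvd.intro_left _ hw₂
      · apply symm
        rw [← Finsupp.notMem_support_iff]
        exact notMem_mono hf'.2 h

theorem partialOddGF_prop [Field α] (n m : ℕ) :
    #{p : n.Partition | ∀ j ∈ p.parts, j ∈ (range m).map mkOdd} = coeff n (partialOddGF (α := α) m) := by
  rw [partialOddGF]
  convert partialGF_prop α n
    ((range m).map mkOdd) _ (fun _ => Set.univ) (fun _ _ => trivial) using 2
  · congr
    simp only [true_and, forall_const, Set.mem_univ]
  · rw [Finset.prod_map]
    simp_rw [num_series']
    congr! 2 with x
    ext k
    constructor
    · rintro ⟨p, rfl⟩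
      refine ⟨p, ⟨⟩, ?_⟩
      apply mul_comm
    rintro ⟨a_w, -, rfl⟩
    apply Dvd.intro_left a_w rfl
  · intro i
    rw [mem_map]
    rintro ⟨a, -, rfl⟩
    exact Nat.succ_pos _

/-- If m is big enough, the partial product's coefficient counts the number of odd partitions -/
theorem oddGF_prop [Field α] (n m : ℕ) (h : n < m * 2) :
    #(Nat.Partition.odds n) = coeff n (partialOddGF (α := α) m) := by
  rw [← partialOddGF_prop, Nat.Partition.odds, Nat.Partition.restricted]
  apply congrArg (fun s => ((#s : ℕ) : α))
  apply Finset.filter_congr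
  intro p _
  apply forall₂_congr
  intro i hi
  have hin : i ≤ n := by
    simpa [p.parts_sum] using Multiset.single_le_sum (fun _ _ => Nat.zero_le _) _ hi
  simp only [mkOdd, exists_prop, mem_range, Function.Embedding.coeFn_mk, mem_map]
  constructor
  · intro hi₂
    have := Nat.mod_add_div i 2
    rw [Nat.not_even_iff] at hi₂
    rw [hi₂, add_comm] at this
    refine ⟨i / 2, ?_, this⟩
    rw [Nat.div_lt_iff_lt_mul zero_lt_two]
    exact lt_of_le_of_lt hin h
  · rintro ⟨a, -, rfl⟩
    rw [even_iff_two_dvd]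
    apply Nat.two_not_dvd_two_mul_add_one

theorem partialDistinctGF_prop [CommSemiring α] (n m : ℕ) :
    #{p : n.Partition |
        p.parts.Nodup ∧ ∀ j ∈ p.parts, j ∈ (range m).map ⟨Nat.succ, Nat.succ_injective⟩} =
      coeff n (partialDistinctGF (α := α) m) := by
  rw [partialDistinctGF]
  convert partialGF_prop α n
    ((range m).map ⟨Nat.succ, Nat.succ_injective⟩) _ (fun _ => {0, 1}) (fun _ _ => Or.inl rfl)
    using 2
  · congr! with p
    rw [Multiset.nodup_iff_count_le_one]
    congr! 1 with i
    rcases Multiset.count i p.parts with (_ | _ | ms) <;> simp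
  · simp_rw [Finset.prod_map, two_series]
    congr with i
    simp [Set.image_pair]
  · simp only [mem_map, Function.Embedding.coeFn_mk]
    rintro i ⟨_, _, rfl⟩
    apply Nat.succ_pos

/-- If m is big enough, the partial product's coefficient counts the number of distinct partitions
-/
theorem distinctGF_prop [CommSemiring α] (n m : ℕ) (h : n < m + 1) :
    #(Nat.Partition.distincts n) = coeff n (partialDistinctGF (α := α) m) := by
  rw [← partialDistinctGF_prop, Nat.Partition.distincts]
  congr with p
  apply (and_iff_left _).symm
  intro i hi
  have : i ≤ n := by
    simpa [p.parts_sum] using Multiset.single_le_sum (fun _ _ => Nat.zero_le _) _ hi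
  simp only [mkOdd, exists_prop, mem_range, Function.Embedding.coeFn_mk, mem_map]
  refine ⟨i - 1, ?_, Nat.succ_pred_eq_of_pos (p.parts_pos hi)⟩
  rw [tsub_lt_iff_right (Nat.one_le_iff_ne_zero.mpr (p.parts_pos hi).ne')]
  exact lt_of_le_of_lt this h


def succEmb' : ℕ ↪ ℕ := ⟨Nat.succ, Nat.succ_injective⟩

/-- Partial generating function for all partitions. -/
def partialAllGF (m : ℕ) [Field α] :=
  ∏ i ∈ range m, (1 - (X : PowerSeries α) ^ (i + 1))⁻¹

theorem partialAllGF_prop [Field α] (n m : ℕ) :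
    #{p : n.Partition | ∀ j ∈ p.parts, j ∈ (range m).map succEmb'} =
      coeff n (partialAllGF (α := α) m) := by
  rw [partialAllGF]
  convert partialGF_prop α n
    ((range m).map succEmb') _ (fun _ => Set.univ) (fun _ _ => trivial) using 2
  · congr
    simp only [true_and, forall_const, Set.mem_univ]
  · rw [Finset.prod_map]
    simp_rw [num_series']
    congr! 2 with x
    ext k
    constructor
    · rintro ⟨p, rfl⟩
      refine ⟨p, ⟨⟩, ?_⟩
      apply mul_comm
    rintro ⟨a_w, -, rfl⟩
    apply Dvd.intro_left a_w rfl
  · intro i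
    rw [mem_map]
    rintro ⟨a, -, rfl⟩
    exact Nat.succ_pos _

theorem allGF_prop [Field α] (n m : ℕ) (h : n < m + 1) :
    (Fintype.card (Nat.Partition n) : α) = coeff n (partialAllGF (α := α) m) := by
  rw [← partialAllGF_prop n m]
  rw [Fintype.card]
  congr 1
  symm
  rw [Finset.filter_true_of_mem]
  intro p _ i hi
  have hin : i ≤ n := by
    simpa [p.parts_sum] using Multiset.single_le_sum (fun _ _ => Nat.zero_le _) _ hi
  simp only [succEmb', mem_map, mem_range, Function.Embedding.coeFn_mk]
  have hip := p.parts_pos hi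
  exact ⟨i - 1, by omega, Nat.succ_pred_eq_of_pos hip⟩

theorem overpartition_coeff [Field α] (n N : ℕ) (h : n < N) :
    ((overpartition n : ℕ) : α) =
      coeff n (partialDistinctGF (α := α) N * partialAllGF N) := by
  rw [coeff_mul, Finset.Nat.sum_antidiagonal_eq_sum_range_succ_mk, overpartition]
  push_cast
  refine Finset.sum_congr rfl fun k hk => ?_
  rw [mem_range] at hk
  rw [← distinctGF_prop k N (by omega), ← allGF_prop (n - k) N (by omega)]

end
end Theorems100


namespace Overpf
open PowerSeries Finset
noncomputable section

abbrev R := PowerSeries ℚ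

def Q : R := X ^ 2

def qb : ℕ → ℕ → R
  | 0, 0 => 1
  | 0, _+1 => 0
  | _+1, 0 => 1
  | m+1, k+1 => qb m (k+1) + Q ^ (m - k) * qb m k

@[simp] lemma qb_zero_right (m : ℕ) : qb m 0 = 1 := by cases m <;> rfl

lemma qb_succ_succ (m k : ℕ) :
    qb (m+1) (k+1) = qb m (k+1) + Q ^ (m - k) * qb m k := rfl

lemma qb_eq_zero : ∀ {m k : ℕ}, m < k → qb m k = 0
  | 0, k+1, _ => rfl
  | m+1, k+1, h => by
    rw [qb_succ_succ, qb_eq_zero (by omega), qb_eq_zero (m := m) (by omega),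
      mul_zero, add_zero]

@[simp] lemma qb_diag : ∀ m : ℕ, qb m m = 1
  | 0 => rfl
  | m+1 => by
    rw [qb_succ_succ, qb_eq_zero (by omega), Nat.sub_self, pow_zero, one_mul,
      qb_diag m, zero_add]

/-- `pp m = ∏_{i<m} (1 - Q^(i+1))`. -/
def pp (m : ℕ) : R := ∏ i ∈ range m, (1 - Q ^ (i + 1))

@[simp] lemma pp_zero : pp 0 = 1 := by simp [pp]

lemma pp_succ (m : ℕ) : pp (m + 1) = pp m * (1 - Q ^ (m + 1)) :=
  Finset.prod_range_succ _ _

@[simp] lemma constantCoeff_pp (m : ℕ) : constantCoeff (pp m) = 1 := by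
  rw [pp, map_prod]
  apply Finset.prod_eq_one
  intro i _
  simp [Q, ← pow_mul]

lemma pp_ne_zero (m : ℕ) : pp m ≠ 0 := fun h => by
  have := constantCoeff_pp m
  rw [h, map_zero] at this
  exact zero_ne_one this

/-- The product formula for Gaussian binomials. -/
lemma qb_mul_pp : ∀ c a b : ℕ, a + b = c → qb (a + b) a * (pp a * pp b) = pp (a + b) := by
  intro c
  induction c with
  | zero =>
    intro a b h
    obtain ⟨rfl, rfl⟩ : a = 0 ∧ b = 0 := by omega
    simp
  | succ c ih =>
    intro a b h
    match a, b with
    | 0, b => simp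
    | a+1, 0 => simp
    | a+1, b+1 =>
      have e1 : a + 1 + (b + 1) = (a + (b + 1)) + 1 := by omega
      have e2 : a + (b + 1) - a = b + 1 := by omega
      have ih1 := ih (a+1) b (by omega)
      have ih2 := ih a (b+1) (by omega)
      rw [show a + 1 + b = a + (b + 1) from by omega, pp_succ a] at ih1
      rw [pp_succ b] at ih2
      have e4 := pp_succ (a + (b + 1))
      rw [show a + (b + 1) + 1 = a + b + 2 from by omega] at e4
      rw [e1, qb_succ_succ, e2, pp_succ a, pp_succ b,
        show a + (b + 1) + 1 = a + b + 2 from by omega, e4]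
      linear_combination (1 - Q^(b+1)) * ih1 + Q^(b+1) * (1 - Q^(a+1)) * ih2


lemma qb_symm (a b : ℕ) : qb (a + b) a = qb (a + b) b := by
  have h1 := qb_mul_pp (a + b) a b rfl
  have h2 := qb_mul_pp (a + b) b a (by omega)
  rw [show b + a = a + b from by omega] at h2
  apply mul_right_cancel₀ (mul_ne_zero (pp_ne_zero a) (pp_ne_zero b))
  linear_combination h1 - h2

lemma qb_form2_aux : ∀ d k : ℕ, qb (k + d + 1) (k + 1) = Q ^ (k+1) * qb (k + d) (k + 1) + qb (k + d) k
  | 0, k => by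
    have h0 : qb (k + 0) (k + 1) = 0 := qb_eq_zero (by omega)
    have h1 : qb (k + 0) k = 1 := by rw [Nat.add_zero, qb_diag]
    have h2 : qb (k + 0 + 1) (k + 1) = 1 := by
      rw [show k + 0 + 1 = k + 1 from rfl, qb_diag]
    rw [h0, h1, h2, mul_zero, zero_add]
  | d'+1, k => by
    have P3 := qb_mul_pp (k + d' + 2) (k+1) (d'+1) (by omega)
    have P1 := qb_mul_pp (k + d' + 1) (k+1) d' (by omega)
    have P2 := qb_mul_pp (k + d' + 1) k (d'+1) (by omega)
    rw [show k + 1 + (d' + 1) = k + d' + 2 from by omega] at P3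
    rw [show k + 1 + d' = k + d' + 1 from by omega] at P1
    rw [show k + (d' + 1) = k + d' + 1 from by omega] at P2
    rw [show k + (d' + 1) + 1 = k + d' + 2 from by omega,
      show k + (d' + 1) = k + d' + 1 from by omega]
    apply mul_right_cancel₀ (mul_ne_zero (pp_ne_zero (k+1)) (pp_ne_zero (d'+1)))
    have e1 := pp_succ d'
    have e2 := pp_succ k
    have e3 := pp_succ (k + d' + 1)
    rw [show k + d' + 1 + 1 = k + d' + 2 from by omega] at e3
    rw [e2] at P1
    rw [e1] at P2
    rw [e1, e2] at P3 ⊢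
    linear_combination P3 + e3 - Q^(k+1) * (1 - Q^(d'+1)) * P1 - (1 - Q^(k+1)) * P2

lemma qb_form2 (m k : ℕ) : qb (m + 1) (k + 1) = Q ^ (k+1) * qb m (k + 1) + qb m k := by
  rcases Nat.lt_or_ge m k with h | h
  · rw [qb_eq_zero (by omega), qb_eq_zero (by omega), qb_eq_zero h, mul_zero, zero_add]
  · obtain ⟨d, rfl⟩ := Nat.exists_eq_add_of_le h
    exact qb_form2_aux d k

/-- Tail product `∏_{c ≤ k < d} (1 - Q^(k+1))`. -/
def tl (c d : ℕ) : R := ∏ k ∈ Ico c d, (1 - Q ^ (k + 1))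

lemma pp_eq_tl (d : ℕ) : pp d = tl 0 d := by rw [pp, tl, range_eq_Ico]

lemma tl_mul (c d e : ℕ) (h1 : c ≤ d) (h2 : d ≤ e) : tl c d * tl d e = tl c e :=
  Finset.prod_Ico_consecutive _ h1 h2

lemma qb_mul_ppN (N i : ℕ) (h : i ≤ N) :
    qb (2 * N) i * pp N = tl i N * tl (2 * N - i) (2 * N) := by
  apply mul_right_cancel₀ (mul_ne_zero (pp_ne_zero i) (pp_ne_zero (2 * N - i)))
  have P := qb_mul_pp (2 * N) i (2 * N - i) (by omega)
  rw [show i + (2 * N - i) = 2 * N from by omega] at P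
  have t1 : pp i * tl i N = pp N := by
    rw [pp_eq_tl i, tl_mul 0 i N (by omega) h, pp_eq_tl]
  have t2 : pp (2 * N - i) * tl (2 * N - i) (2 * N) = pp (2 * N) := by
    rw [pp_eq_tl (2 * N - i), tl_mul 0 (2 * N - i) (2 * N) (by omega) (by omega), pp_eq_tl]
  linear_combination pp N * P - tl (2 * N - i) (2 * N) * pp (2 * N - i) * t1 - pp N * t2

lemma X_dvd_tl_sub_one (c : ℕ) : ∀ d : ℕ, (X : R) ^ (2 * c + 2) ∣ tl c d - 1
  | 0 => by
    rw [tl, Ico_eq_empty (by omega), prod_empty, sub_self]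
    exact dvd_zero _
  | d+1 => by
    rcases Nat.lt_or_ge d c with h | h
    · rw [tl, Ico_eq_empty (by omega), prod_empty, sub_self]
      exact dvd_zero _
    · have ht : tl c (d + 1) = tl c d * (1 - Q ^ (d + 1)) := by
        rw [tl, tl, Finset.prod_Ico_succ_top (by omega)]
      rw [ht]
      have h1 : (X : R) ^ (2 * c + 2) ∣ tl c d - 1 := X_dvd_tl_sub_one c d
      have h2 : (X : R) ^ (2 * c + 2) ∣ Q ^ (d + 1) := by
        rw [Q, ← pow_mul]
        exact pow_dvd_pow _ (by omega)
      have : tl c d * (1 - Q ^ (d + 1)) - 1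
          = (tl c d - 1) - Q ^ (d + 1) * tl c d := by ring
      rw [this]
      exact dvd_sub h1 (h2.mul_right _)

lemma mul_sub_one_dvd {m : ℕ} {A B : R} (hA : (X : R) ^ m ∣ A - 1) (hB : (X : R) ^ m ∣ B - 1) :
    (X : R) ^ m ∣ A * B - 1 := by
  have : A * B - 1 = A * (B - 1) + (A - 1) := by ring
  rw [this]
  exact dvd_add (hB.mul_left _) hA

lemma u_structure (N i : ℕ) (h : i ≤ 2 * N) :
    (X : R) ^ (2 * (min i (2 * N - i)) + 2) ∣ qb (2 * N) i * pp N - 1 := by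
  rcases le_or_gt i N with hi | hi
  · rw [qb_mul_ppN N i hi, show min i (2 * N - i) = i from by omega]
    exact mul_sub_one_dvd (X_dvd_tl_sub_one i N)
      (dvd_trans (pow_dvd_pow _ (by omega)) (X_dvd_tl_sub_one (2 * N - i) (2 * N)))
  · have hsymm : qb (2 * N) i = qb (2 * N) (2 * N - i) := by
      have := qb_symm i (2 * N - i)
      rwa [show i + (2 * N - i) = 2 * N from by omega] at this
    rw [hsymm, qb_mul_ppN N (2 * N - i) (by omega),
      show min i (2 * N - i) = 2 * N - i from by omega,
      show 2 * N - (2 * N - i) = i from by omega]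
    exact mul_sub_one_dvd (X_dvd_tl_sub_one (2 * N - i) N)
      (dvd_trans (pow_dvd_pow _ (by omega)) (X_dvd_tl_sub_one i (2 * N)))

/-- `(i - N)^2` as a natural number. -/
def Esq (N i : ℕ) : ℕ := (((i : ℤ) - N).natAbs) ^ 2

lemma Esq_cast (N i : ℕ) : ((Esq N i : ℕ) : ℤ) = ((i : ℤ) - N) ^ 2 := by
  rw [Esq]
  push_cast
  rw [sq_abs]

lemma expo1 (N i : ℕ) : Esq (N+1) i + 2*i = Esq N i + (2*N+1) := by
  have h : ((Esq (N+1) i + 2*i : ℕ) : ℤ) = ((Esq N i + (2*N+1) : ℕ) : ℤ) := by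
    push_cast [Esq_cast]; ring
  exact_mod_cast h

lemma expo2 (N j : ℕ) : Esq (N+1) (j+1) = Esq N j := by
  have h : ((Esq (N+1) (j+1) : ℕ) : ℤ) = ((Esq N j : ℕ) : ℤ) := by
    push_cast [Esq_cast]; ring
  exact_mod_cast h

lemma expo3 (N j : ℕ) (hj : j ≤ 2*N) :
    Esq (N+1) (j+2) + 2*(2*N - j) = Esq N j + (2*N+1) := by
  have h : ((Esq (N+1) (j+2) + 2*(2*N - j) : ℕ) : ℤ) = ((Esq N j + (2*N+1) : ℕ) : ℤ) := by
    push_cast [Esq_cast, Nat.cast_sub hj]; ring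
  exact_mod_cast h

/-- Finite Gauss theta sum. -/
def S (N : ℕ) : R :=
  ∑ i ∈ range (2*N+1), (-1 : R)^(i+N) * X^(Esq N i) * qb (2*N) i

lemma qb_comp1 (N : ℕ) :
    qb (2*N+2) 1 = Q^1 * qb (2*N) 1 + (1 + Q^(2*N+1)) * qb (2*N) 0 := by
  have h1 : qb (2*N+2) 1 = qb (2*N+1) 1 + Q^(2*N+1) * qb (2*N+1) 0 := by
    have h := qb_succ_succ (2*N+1) 0
    rwa [show 2*N+1-0 = 2*N+1 from rfl] at h
  have h2 : qb (2*N+1) 1 = Q^1 * qb (2*N) 1 + qb (2*N) 0 := qb_form2 (2*N) 0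
  rw [h1, h2, qb_zero_right, qb_zero_right]
  ring

lemma qb_comp2 (N j : ℕ) (hj : j ≤ 2*N) :
    qb (2*N+2) (j+2) = Q^(j+2) * qb (2*N) (j+2)
      + (1 + Q^(2*N+1)) * qb (2*N) (j+1) + Q^(2*N-j) * qb (2*N) j := by
  have h1 : qb (2*N+2) (j+2) = qb (2*N+1) (j+2) + Q^(2*N-j) * qb (2*N+1) (j+1) := by
    have h := qb_succ_succ (2*N+1) (j+1)
    rwa [show 2*N+1-(j+1) = 2*N-j from by omega] at h
  have h2 := qb_form2 (2*N) (j+1)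
  have h3 := qb_form2 (2*N) j
  rw [h1, h2, h3]
  have e : (Q:R)^(2*N-j) * Q^(j+1) = Q^(2*N+1) := by
    rw [← pow_add]; congr 1; omega
  linear_combination (qb (2*N) (j+1)) * e

lemma sumg1 (N : ℕ) :
    ∑ i ∈ range (2*N+3), (-1:R)^(i+(N+1)) * X^(Esq (N+1) i) * (Q^i * qb (2*N) i)
      = -(X^(2*N+1)) * S N := by
  rw [show 2*N+3 = (2*N+2)+1 from rfl, Finset.sum_range_succ,
    show 2*N+2 = (2*N+1)+1 from rfl, Finset.sum_range_succ,
    qb_eq_zero (show 2*N < 2*N+1 from by omega),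
    qb_eq_zero (show 2*N < 2*N+2 from by omega)]
  simp only [mul_zero, add_zero]
  rw [S, Finset.mul_sum]
  refine Finset.sum_congr rfl fun i _ => ?_
  have hx : (X:R)^(Esq (N+1) i) * Q^i = X^(2*N+1) * X^(Esq N i) := by
    rw [Q, ← pow_mul, ← pow_add, ← pow_add]
    congr 1
    have := expo1 N i; omega
  calc (-1:R)^(i+(N+1)) * X^(Esq (N+1) i) * (Q^i * qb (2*N) i)
      = ((-1:R)^(i+N) * (-1)) * ((X:R)^(Esq (N+1) i) * Q^i) * qb (2*N) i := by
        rw [show i+(N+1) = (i+N)+1 from rfl, pow_succ]; ring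
    _ = -(X^(2*N+1)) * ((-1:R)^(i+N) * X^(Esq N i) * qb (2*N) i) := by
        rw [hx]; ring

lemma sumg2 (N : ℕ) :
    ∑ j ∈ range (2*N+2), (-1:R)^(j+N) * X^(Esq (N+1) (j+1)) * ((1+Q^(2*N+1)) * qb (2*N) j)
      = (1 + X^(4*N+2)) * S N := by
  rw [show 2*N+2 = (2*N+1)+1 from rfl, Finset.sum_range_succ,
    qb_eq_zero (show 2*N < 2*N+1 from by omega)]
  simp only [mul_zero, add_zero]
  rw [S, Finset.mul_sum]
  refine Finset.sum_congr rfl fun j _ => ?_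
  rw [expo2]
  have hq : (Q:R)^(2*N+1) = X^(4*N+2) := by
    rw [Q, ← pow_mul]; congr 1; omega
  rw [hq]; ring

lemma sumg3 (N : ℕ) :
    ∑ j ∈ range (2*N+1), (-1:R)^(j+(N+1)) * X^(Esq (N+1) (j+2)) * (Q^(2*N-j) * qb (2*N) j)
      = -(X^(2*N+1)) * S N := by
  rw [S, Finset.mul_sum]
  refine Finset.sum_congr rfl fun j hj => ?_
  rw [mem_range] at hj
  have hx : (X:R)^(Esq (N+1) (j+2)) * Q^(2*N-j) = X^(2*N+1) * X^(Esq N j) := by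
    rw [Q, ← pow_mul, ← pow_add, ← pow_add]
    congr 1
    have := expo3 N j (by omega); omega
  calc (-1:R)^(j+(N+1)) * X^(Esq (N+1) (j+2)) * (Q^(2*N-j) * qb (2*N) j)
      = ((-1:R)^(j+N) * (-1)) * ((X:R)^(Esq (N+1) (j+2)) * Q^(2*N-j)) * qb (2*N) j := by
        rw [show j+(N+1) = (j+N)+1 from rfl, pow_succ]; ring
    _ = -(X^(2*N+1)) * ((-1:R)^(j+N) * X^(Esq N j) * qb (2*N) j) := by
        rw [hx]; ring

lemma S_succ (N : ℕ) : S (N+1) = (1 - X^(2*N+1))^2 * S N := by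
  have t0 : (-1:R)^(0+(N+1)) * X^(Esq (N+1) 0) * qb (2*N+2) 0
      = (-1:R)^(0+(N+1)) * X^(Esq (N+1) 0) * (Q^0 * qb (2*N) 0) := by
    rw [qb_zero_right, qb_zero_right]; ring
  have t1 : (-1:R)^(0+1+(N+1)) * X^(Esq (N+1) (0+1)) * qb (2*N+2) (0+1)
      = (-1:R)^(0+1+(N+1)) * X^(Esq (N+1) (0+1)) * (Q^(0+1) * qb (2*N) (0+1))
        + (-1:R)^(0+N) * X^(Esq (N+1) (0+1)) * ((1+Q^(2*N+1)) * qb (2*N) 0) := by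
    rw [show (0+1 : ℕ) = 1 from rfl, qb_comp1 N]
    simp only [pow_add, pow_one, pow_zero]
    ring
  have tstep : ∀ j ∈ range (2*N+1),
      (-1:R)^(j+1+1+(N+1)) * X^(Esq (N+1) (j+1+1)) * qb (2*N+2) (j+1+1)
      = (-1:R)^(j+1+1+(N+1)) * X^(Esq (N+1) (j+1+1)) * (Q^(j+1+1) * qb (2*N) (j+1+1))
        + ((-1:R)^(j+1+N) * X^(Esq (N+1) (j+1+1)) * ((1+Q^(2*N+1)) * qb (2*N) (j+1))
        + (-1:R)^(j+(N+1)) * X^(Esq (N+1) (j+2)) * (Q^(2*N-j) * qb (2*N) j)) := by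
    intro j hj
    rw [mem_range] at hj
    rw [show j+1+1 = j+2 from rfl, qb_comp2 N j (by omega)]
    simp only [pow_add, pow_one]
    ring
  have L : S (N+1)
      = ∑ j ∈ range (2*N+1), (-1:R)^(j+1+1+(N+1)) * X^(Esq (N+1) (j+1+1)) * qb (2*N+2) (j+1+1)
        + (-1:R)^(0+1+(N+1)) * X^(Esq (N+1) (0+1)) * qb (2*N+2) (0+1)
        + (-1:R)^(0+(N+1)) * X^(Esq (N+1) 0) * qb (2*N+2) 0 := by
    rw [S, show (2*(N+1) : ℕ) = 2*N+2 from by omega, Finset.sum_range_succ',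
      Finset.sum_range_succ']
  have A1 : ∑ i ∈ range (2*N+3), (-1:R)^(i+(N+1)) * X^(Esq (N+1) i) * (Q^i * qb (2*N) i)
      = ∑ j ∈ range (2*N+1), (-1:R)^(j+1+1+(N+1)) * X^(Esq (N+1) (j+1+1)) * (Q^(j+1+1) * qb (2*N) (j+1+1))
        + (-1:R)^(0+1+(N+1)) * X^(Esq (N+1) (0+1)) * (Q^(0+1) * qb (2*N) (0+1))
        + (-1:R)^(0+(N+1)) * X^(Esq (N+1) 0) * (Q^0 * qb (2*N) 0) := by
    rw [show (2*N+3 : ℕ) = 2*N+1+1+1 from by omega, Finset.sum_range_succ',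
      Finset.sum_range_succ']
  have A2 : ∑ j ∈ range (2*N+2), (-1:R)^(j+N) * X^(Esq (N+1) (j+1)) * ((1+Q^(2*N+1)) * qb (2*N) j)
      = ∑ j ∈ range (2*N+1), (-1:R)^(j+1+N) * X^(Esq (N+1) (j+1+1)) * ((1+Q^(2*N+1)) * qb (2*N) (j+1))
        + (-1:R)^(0+N) * X^(Esq (N+1) (0+1)) * ((1+Q^(2*N+1)) * qb (2*N) 0) := by
    rw [show (2*N+2 : ℕ) = 2*N+1+1 from rfl, Finset.sum_range_succ']
  have key : S (N+1)
      = (∑ i ∈ range (2*N+3), (-1:R)^(i+(N+1)) * X^(Esq (N+1) i) * (Q^i * qb (2*N) i))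
      + (∑ j ∈ range (2*N+2), (-1:R)^(j+N) * X^(Esq (N+1) (j+1)) * ((1+Q^(2*N+1)) * qb (2*N) j))
      + (∑ j ∈ range (2*N+1), (-1:R)^(j+(N+1)) * X^(Esq (N+1) (j+2)) * (Q^(2*N-j) * qb (2*N) j)) := by
    rw [L, A1, A2, Finset.sum_congr rfl tstep, Finset.sum_add_distrib, Finset.sum_add_distrib,
      t0, t1]
    ring
  rw [key, sumg1, sumg2, sumg3]
  ring

lemma S_zero : S 0 = 1 := by
  rw [S]
  simp [Esq, qb]

lemma gaussS : ∀ N : ℕ, (∏ k ∈ range N, (1 - (X:R)^(2*k+1)))^2 = S N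
  | 0 => by simp [S_zero]
  | N+1 => by
    rw [Finset.prod_range_succ, mul_pow, gaussS N, S_succ]
    ring

/-- The coefficients of the theta series `φ(-q)`. -/
def gaussInt : ℕ → ℤ := fun a =>
  if a.sqrt * a.sqrt = a then (if a = 0 then 1 else 2 * (-1)^a.sqrt) else 0

lemma sign_congr {a b : ℕ} (h : a % 2 = b % 2) : (-1:ℚ)^a = (-1:ℚ)^b := by
  rcases Nat.even_or_odd a with ha | ha
  · have hb : Even b := by rw [Nat.even_iff] at *; omega
    rw [ha.neg_one_pow, hb.neg_one_pow]
  · have hb : Odd b := by rw [Nat.odd_iff] at *; omega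
    rw [ha.neg_one_pow, hb.neg_one_pow]

lemma coeff_phi (N n : ℕ) (hn : n ≤ N) :
    (coeff n) (S N * pp N) = (gaussInt n : ℚ) := by
  have hterm : ∀ i ∈ range (2*N+1),
      (coeff n) ((-1:R)^(i+N) * X^(Esq N i) * qb (2*N) i * pp N)
      = (if Esq N i = n then ((-1:ℚ))^(i+N) else 0) := by
    intro i hi
    rw [mem_range] at hi
    obtain ⟨w, hw⟩ := u_structure N i (by omega)
    have hqp : qb (2*N) i * pp N = 1 + X^(2*(min i (2*N-i))+2) * w := by
      linear_combination hw
    have hC : ((-1:R))^(i+N) = C ((-1)^(i+N)) := by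
      rw [map_pow, map_neg, map_one]
    have harr : (-1:R)^(i+N) * X^(Esq N i) * qb (2*N) i * pp N
        = C ((-1)^(i+N)) * X^(Esq N i)
          + C ((-1)^(i+N)) * (X^(Esq N i) * (X^(2*(min i (2*N-i))+2) * w)) := by
      rw [← hC]
      calc (-1:R)^(i+N) * X^(Esq N i) * qb (2*N) i * pp N
          = (-1:R)^(i+N) * X^(Esq N i) * (qb (2*N) i * pp N) := by ring
        _ = _ := by rw [hqp]; ring
    rw [harr, map_add, coeff_C_mul, coeff_C_mul, coeff_X_pow]
    have hE : Esq N i = (((i:ℤ) - N).natAbs) * (((i:ℤ) - N).natAbs) := by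
      rw [Esq, pow_two]
    have hlt : n < Esq N i + (2*(min i (2*N-i))+2) := by
      set j := ((i:ℤ) - N).natAbs with hjdef
      have hj2 : 2*j ≤ j*j + 1 := by nlinarith
      omega
    have hz : (coeff n) (X^(Esq N i) * (X^(2*(min i (2*N-i))+2) * w)) = 0 := by
      have hdvd : (X:R)^(Esq N i + (2*(min i (2*N-i))+2))
          ∣ X^(Esq N i) * (X^(2*(min i (2*N-i))+2) * w) := by
        rw [pow_add]
        exact mul_dvd_mul_left _ (dvd_mul_right _ _)
      exact (X_pow_dvd_iff.mp hdvd) n hlt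
    rw [hz, mul_zero, add_zero]
    by_cases hEn : Esq N i = n
    · rw [if_pos hEn, if_pos (by omega : n = Esq N i), mul_one]
    · rw [if_neg hEn, if_neg (fun h => hEn h.symm), mul_zero]
  rw [S, Finset.sum_mul, map_sum, Finset.sum_congr rfl hterm]
  by_cases hsq : n.sqrt * n.sqrt = n
  · by_cases h0 : n = 0
    · subst h0
      rw [Finset.sum_eq_single_of_mem N (by rw [mem_range]; omega)]
      · have hE : Esq N N = 0 := by
          have h : ((N:ℤ) - N).natAbs = 0 := by omega
          rw [Esq, h]
          norm_num
        have hpow : (-1:ℚ)^(N+N) = 1 := by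
          rw [show N+N = 2*N from by omega, pow_mul]; norm_num
        rw [if_pos hE, hpow, gaussInt]
        norm_num
      · intro b _ hb
        apply if_neg
        intro hE
        apply hb
        have h1 : (((b:ℤ) - N).natAbs)^2 = 0 := hE
        have h2 : ((b:ℤ) - N).natAbs = 0 := by
          simpa using pow_eq_zero_iff (two_ne_zero) |>.mp h1
        omega
    · set s := n.sqrt with hs
      have hs1 : 1 ≤ s := by
        rcases Nat.eq_zero_or_pos s with h | h
        · rw [h] at hsq; omega
        · omega
      have hsN : s ≤ N := by nlinarith
      have hsum : ∑ i ∈ range (2*N+1), (if Esq N i = n then ((-1:ℚ))^(i+N) else 0)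
          = ∑ i ∈ ({N-s, N+s} : Finset ℕ), (if Esq N i = n then ((-1:ℚ))^(i+N) else 0) := by
        symm
        apply Finset.sum_subset
        · intro x hx
          simp only [Finset.mem_insert, Finset.mem_singleton] at hx
          rw [mem_range]; omega
        · intro x hx hx2
          simp only [Finset.mem_insert, Finset.mem_singleton] at hx2
          apply if_neg
          intro hE
          have h1 : (((x:ℤ) - N).natAbs) * (((x:ℤ) - N).natAbs) = s * s := by
            have h := hE
            rw [Esq] at h
            rw [← pow_two, h, ← hsq]
          have h2 : ((x:ℤ) - N).natAbs = s := Nat.mul_self_inj.mp h1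
          omega
      rw [hsum, Finset.sum_insert (by simp only [Finset.mem_singleton]; omega),
        Finset.sum_singleton]
      have hE1 : Esq N (N-s) = n := by
        have h : (((N-s : ℕ):ℤ) - N).natAbs = s := by omega
        rw [Esq, h, pow_two, hsq]
      have hE2 : Esq N (N+s) = n := by
        have h : (((N+s : ℕ):ℤ) - N).natAbs = s := by omega
        rw [Esq, h, pow_two, hsq]
      rw [if_pos hE1, if_pos hE2]
      rw [sign_congr (show (N-s+N) % 2 = s % 2 from by omega),
        sign_congr (show (N+s+N) % 2 = s % 2 from by omega)]
      rw [gaussInt, if_pos hsq, if_neg h0]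
      push_cast
      ring
  · rw [gaussInt, if_neg hsq]
    rw [Finset.sum_eq_zero]
    · norm_num
    intro i _
    apply if_neg
    intro hE
    apply hsq
    have h1 : n = (((i:ℤ)-N).natAbs) * (((i:ℤ)-N).natAbs) := by
      rw [← hE, Esq, pow_two]
    rw [h1, Nat.sqrt_eq]

def fE (N : ℕ) : R := ∏ i ∈ range N, (1 - X^(i+1))

def Ogf (N : ℕ) : R := ∏ k ∈ range N, (1 - (X:R)^(2*k+1))

def Dgf (N : ℕ) : R := ∏ i ∈ range N, (1 + X^(i+1))

def Igf (N : ℕ) : R := ∏ i ∈ range N, (1 - (X:R)^(i+1))⁻¹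

@[simp] lemma constantCoeff_fE (N : ℕ) : constantCoeff (fE N) = 1 := by
  rw [fE, map_prod]
  apply Finset.prod_eq_one
  intro i _
  simp

lemma fE_ne_zero (N : ℕ) : fE N ≠ 0 := fun h => by
  have := constantCoeff_fE N
  rw [h, map_zero] at this
  exact zero_ne_one this

lemma Qpow (k : ℕ) : (Q:R)^(k+1) = X^(2*k+2) := by
  rw [Q, ← pow_mul, show 2*(k+1) = 2*k+2 from by omega]

lemma Ogf_mul_pp : ∀ N : ℕ, Ogf N * pp N = fE (2*N)
  | 0 => by simp [Ogf, pp, fE]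
  | N+1 => by
    rw [Ogf, Finset.prod_range_succ, ← Ogf, pp_succ,
      show 2*(N+1) = (2*N+1)+1 from by omega, fE, Finset.prod_range_succ,
      show (2*N+1 : ℕ) = (2*N)+1 from rfl, Finset.prod_range_succ, ← fE,
      ← Ogf_mul_pp N, Qpow N]
    rw [show 2*N+1+1 = 2*N+2 from rfl]
    ring

lemma prod_one_sub_X_pow_dvd (m : ℕ) (s : Finset ℕ) (f : ℕ → ℕ) (h : ∀ k ∈ s, m ≤ f k) :
    (X:R)^m ∣ (∏ k ∈ s, (1 - X^(f k))) - 1 := by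
  induction s using Finset.induction_on with
  | empty => simp
  | insert a s' hnotmem ih =>
    rw [Finset.prod_insert hnotmem]
    have h1 : (1 - (X:R)^(f a)) * ∏ k ∈ s', (1 - X^(f k)) - 1
        = ((∏ k ∈ s', (1 - X^(f k))) - 1) - X^(f a) * ∏ k ∈ s', (1 - X^(f k)) := by ring
    rw [h1]
    exact dvd_sub (ih fun k hk => h k (Finset.mem_insert_of_mem hk))
      (((pow_dvd_pow X (h a (Finset.mem_insert_self a s'))).mul_right _))

def tlX (N : ℕ) : R := ∏ k ∈ Ico N (2*N), (1 - X^(k+1))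

lemma fE_split (N : ℕ) : fE (2*N) = fE N * tlX N := by
  rw [fE, fE, tlX, range_eq_Ico, range_eq_Ico]
  exact (Finset.prod_Ico_consecutive (fun k => (1 - (X:R)^(k+1))) (by omega : 0 ≤ N) (by omega : N ≤ 2*N)).symm

lemma X_dvd_tlX (N : ℕ) : (X:R)^(N+1) ∣ tlX N - 1 := by
  apply prod_one_sub_X_pow_dvd
  intro k hk
  rw [mem_Ico] at hk
  omega

lemma Igf_mul_fE (N : ℕ) : Igf N * fE N = 1 := by
  rw [Igf, fE, ← Finset.prod_mul_distrib]
  apply Finset.prod_eq_one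
  intro i _
  apply PowerSeries.inv_mul_cancel
  simp

lemma Dgf_mul_fE (N : ℕ) : Dgf N * fE N = pp N := by
  rw [Dgf, fE, pp, ← Finset.prod_mul_distrib]
  apply Finset.prod_congr rfl
  intro i _
  rw [Qpow]
  ring

lemma T_eq (N : ℕ) : (Ogf N^2 * pp N) * (Dgf N * Igf N) = tlX N ^ 2 := by
  apply mul_right_cancel₀ (mul_ne_zero (fE_ne_zero N) (fE_ne_zero N))
  calc (Ogf N^2 * pp N) * (Dgf N * Igf N) * (fE N * fE N)
      = (Ogf N^2 * pp N) * (Dgf N * fE N) * (Igf N * fE N) := by ring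
    _ = (Ogf N^2 * pp N) * pp N * 1 := by rw [Dgf_mul_fE, Igf_mul_fE]
    _ = (Ogf N * pp N)^2 := by ring
    _ = (fE (2*N))^2 := by rw [Ogf_mul_pp]
    _ = (fE N * tlX N)^2 := by rw [fE_split]
    _ = (tlX N^2) * (fE N * fE N) := by ring

lemma coeff_T (N n : ℕ) (h1 : 1 ≤ n) (hn : n ≤ N) :
    (coeff n) ((Ogf N^2 * pp N) * (Dgf N * Igf N)) = 0 := by
  rw [T_eq]
  have hdvd : (X:R)^(N+1) ∣ tlX N^2 - 1 := by
    have := mul_sub_one_dvd (X_dvd_tlX N) (X_dvd_tlX N)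
    rwa [← pow_two] at this
  have hz : (coeff n) (tlX N^2 - 1) = 0 := X_pow_dvd_iff.mp hdvd n (by omega)
  have : (coeff n) (tlX N^2) = (coeff n) (tlX N^2 - 1) + (coeff n) (1:R) := by
    rw [← map_add]
    congr 1
    ring
  rw [this, hz, coeff_one, if_neg (by omega)]
  ring

lemma Ogf_def (N : ℕ) : Ogf N = ∏ k ∈ range N, (1 - (X:R)^(2*k+1)) := rfl

lemma Dgf_eq (N : ℕ) : Dgf N = Theorems100.partialDistinctGF N := rfl

lemma Igf_eq (N : ℕ) : Igf N = Theorems100.partialAllGF N := rfl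

theorem over_rec (n : ℕ) (h1 : 1 ≤ n) :
    ∑ k ∈ range (n+1), gaussInt k * (overpartition (n - k) : ℤ) = 0 := by
  have key := coeff_T (n+1) n h1 (by omega)
  rw [coeff_mul, Finset.Nat.sum_antidiagonal_eq_sum_range_succ_mk] at key
  have hterm : ∀ k ∈ range (n+1),
      (coeff (k, n-k).1) (Ogf (n+1)^2 * pp (n+1)) * (coeff (k, n-k).2) (Dgf (n+1) * Igf (n+1))
      = (gaussInt k : ℚ) * ((overpartition (n-k) : ℕ) : ℚ) := by
    intro k hk
    rw [mem_range] at hk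
    have hphi : (coeff k) (Ogf (n+1)^2 * pp (n+1)) = (gaussInt k : ℚ) := by
      rw [Ogf_def, gaussS]
      exact coeff_phi (n+1) k (by omega)
    have hover : (coeff (n-k)) (Dgf (n+1) * Igf (n+1)) = ((overpartition (n-k) : ℕ) : ℚ) := by
      rw [Dgf_eq, Igf_eq]
      exact (Theorems100.overpartition_coeff (n-k) (n+1) (by omega)).symm
    exact by rw [show ((k, n-k).1 : ℕ) = k from rfl, show ((k, n-k).2 : ℕ) = n-k from rfl,
      hphi, hover]
  rw [Finset.sum_congr rfl hterm] at key
  have hcast : ((∑ k ∈ range (n+1), gaussInt k * (overpartition (n - k) : ℤ) : ℤ) : ℚ) = 0 := by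
    push_cast
    rw [← key]
  exact_mod_cast hcast

lemma gaussInt_zero : gaussInt 0 = 1 := by simp [gaussInt]

lemma gaussInt_sq (j : ℕ) : gaussInt ((j+1)*(j+1)) = 2 * (-1)^(j+1) := by
  rw [gaussInt, Nat.sqrt_eq, if_pos rfl,
    if_neg (Nat.mul_ne_zero (by omega) (by omega))]

lemma gaussInt_nonsq {a : ℕ} (h : ¬ (a.sqrt * a.sqrt = a)) : gaussInt a = 0 := if_neg h

lemma sum_gauss (n : ℕ) (c : ℕ → ℤ) :
    ∑ k ∈ range (n+1), gaussInt k * c k = ∑ j ∈ range (n.sqrt + 1), gaussInt (j*j) * c (j*j) := by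
  have h1 : ∑ k ∈ range (n+1), gaussInt k * c k
      = ∑ k ∈ (range (n+1)).filter (fun k => k.sqrt * k.sqrt = k), gaussInt k * c k := by
    symm
    apply Finset.sum_filter_of_ne
    intro x _ hx
    by_contra h
    rw [gaussInt_nonsq h, zero_mul] at hx
    exact hx rfl
  have h2 : (range (n+1)).filter (fun k => k.sqrt * k.sqrt = k)
      = (range (n.sqrt+1)).image (fun j => j*j) := by
    ext a
    simp only [Finset.mem_filter, mem_range, Finset.mem_image]
    constructor
    · rintro ⟨ha, hsq⟩
      refine ⟨a.sqrt, ?_, hsq⟩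
      have := Nat.sqrt_le_sqrt (show a ≤ n from by omega)
      omega
    · rintro ⟨j, hj, rfl⟩
      constructor
      · have h3 : j*j ≤ n.sqrt * n.sqrt := Nat.mul_le_mul (by omega) (by omega)
        have h4 : n.sqrt * n.sqrt ≤ n := by
          have := Nat.sqrt_le' n
          nlinarith
        omega
      · rw [Nat.sqrt_eq]
  rw [h1, h2, Finset.sum_image (fun x _ y _ h => Nat.mul_self_inj.mp h)]

lemma over_rec' (n : ℕ) (h1 : 1 ≤ n) :
    (overpartition n : ℤ)
      = ∑ j ∈ range n.sqrt, 2 * (-1)^j * (overpartition (n - (j+1)*(j+1)) : ℤ) := by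
  have h := over_rec n h1
  rw [sum_gauss n (fun k => (overpartition (n-k) : ℤ)), Finset.sum_range_succ'] at h
  simp only [gaussInt_sq] at h
  rw [show (0*0 : ℕ) = 0 from rfl, gaussInt_zero, one_mul, Nat.sub_zero] at h
  have h2 : (overpartition n : ℤ)
      = -∑ j ∈ range n.sqrt, 2*(-1)^(j+1) * (overpartition (n - (j+1)*(j+1)) : ℤ) := by
    linear_combination h
  rw [h2, ← Finset.sum_neg_distrib]
  apply Finset.sum_congr rfl
  intro j _
  rw [pow_succ]
  ring

lemma sq_le_of_lt_sqrt {j m : ℕ} (hj : j < m.sqrt) : (j+1)*(j+1) ≤ m := by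
  have h1 : (j+1)*(j+1) ≤ m.sqrt * m.sqrt := Nat.mul_le_mul (by omega) (by omega)
  have h2 := Nat.sqrt_le' m
  nlinarith

lemma two_dvd_over (m : ℕ) (h : 1 ≤ m) : (2:ℤ) ∣ (overpartition m : ℤ) := by
  rw [over_rec' m h]
  apply Finset.dvd_sum
  intro j _
  exact (dvd_mul_right 2 ((-1)^j)).mul_right _

lemma sq_mod_four (j : ℕ) : ((j+1)*(j+1)) % 4 = 0 ∨ ((j+1)*(j+1)) % 4 = 1 := by
  have h2 : (j+1) % 4 = 0 ∨ (j+1) % 4 = 1 ∨ (j+1) % 4 = 2 ∨ (j+1) % 4 = 3 := by omega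
  have h3 := Nat.mul_mod (j+1) (j+1) 4
  rcases h2 with h2|h2|h2|h2 <;> rw [h2] at h3 <;> omega

lemma four_dvd_over (m : ℕ) (h : m % 4 = 3) : (4:ℤ) ∣ (overpartition m : ℤ) := by
  rw [over_rec' m (by omega)]
  apply Finset.dvd_sum
  intro j hj
  rw [mem_range] at hj
  have hle := sq_le_of_lt_sqrt hj
  have hmod := sq_mod_four j
  have harg : 1 ≤ m - (j+1)*(j+1) := by omega
  obtain ⟨t, ht⟩ := two_dvd_over _ harg
  rw [ht]
  exact ⟨(-1)^j * t, by ring⟩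

lemma sum_parity (f : ℕ → ℤ) : ∀ M : ℕ, ∑ j ∈ range M, f j
    = ∑ k ∈ range ((M+1)/2), f (2*k) + ∑ k ∈ range (M/2), f (2*k+1)
  | 0 => by simp
  | M+1 => by
    rw [Finset.sum_range_succ, sum_parity f M]
    rcases Nat.even_or_odd M with hM | hM
    · obtain ⟨m, rfl⟩ : ∃ m, M = 2*m := by
        rcases hM with ⟨m, hm⟩; exact ⟨m, by omega⟩
      rw [show (2*m+1+1)/2 = m+1 from by omega, show (2*m+1)/2 = m from by omega,
        show (2*m)/2 = m from by omega, Finset.sum_range_succ]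
      ring
    · obtain ⟨m, rfl⟩ : ∃ m, M = 2*m+1 := by
        rcases hM with ⟨m, hm⟩; exact ⟨m, by omega⟩
      rw [show (2*m+1+1+1)/2 = m+1 from by omega, show (2*m+1+1)/2 = m+1 from by omega,
        show (2*m+1)/2 = m from by omega, Finset.sum_range_succ, Finset.sum_range_succ]
      ring

lemma signZ {a b : ℕ} (h : a % 2 = b % 2) : ((-1:ℤ))^a = (-1)^b := by
  rcases Nat.even_or_odd a with ha | ha
  · have hb : Even b := by rw [Nat.even_iff] at *; omega
    rw [ha.neg_one_pow, hb.neg_one_pow]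
  · have hb : Odd b := by rw [Nat.odd_iff] at *; omega
    rw [ha.neg_one_pow, hb.neg_one_pow]

lemma main_ind : ∀ n : ℕ, (overpartition (4*n) : ZMod 8) = (-1)^n * (overpartition n : ZMod 8) := by
  intro n
  induction n using Nat.strong_induction_on with
  | _ n ih =>
  rcases Nat.eq_zero_or_pos n with rfl | hn
  · norm_num
  have hss : n.sqrt * n.sqrt ≤ n := by
    have := Nat.sqrt_le' n; nlinarith
  have hlt : n < (n.sqrt+1)*(n.sqrt+1) := by
    have := Nat.lt_succ_sqrt' n; nlinarith
  have hM1 : 2*n.sqrt ≤ (4*n).sqrt := Nat.le_sqrt.mpr (by nlinarith)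
  have hM2 : (4*n).sqrt < 2*n.sqrt+2 := Nat.sqrt_lt.mpr (by nlinarith)
  have hMM : (4*n).sqrt * (4*n).sqrt ≤ 4*n := by
    have := Nat.sqrt_le' (4*n); nlinarith
  have hhalf : (4*n).sqrt / 2 = n.sqrt := by omega
  have hZ : (overpartition (4*n) : ℤ)
      = (∑ k ∈ range (((4*n).sqrt+1)/2),
          2*(-1)^(2*k) * (overpartition (4*n - (2*k+1)*(2*k+1)) : ℤ))
      + (∑ k ∈ range n.sqrt,
          2*(-1)^(2*k+1) * (overpartition (4*n - (2*k+1+1)*(2*k+1+1)) : ℤ)) := by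
    rw [over_rec' (4*n) (by omega),
      sum_parity (fun j => 2 * (-1)^j * (overpartition (4*n - (j+1)*(j+1)) : ℤ)) ((4*n).sqrt),
      hhalf]
  have hZc := congrArg (fun x : ℤ => (x : ZMod 8)) hZ
  push_cast at hZc
  rw [hZc]
  have hA : (∑ k ∈ range (((4*n).sqrt+1)/2),
      2*(-1)^(2*k) * ((overpartition (4*n - (2*k+1)*(2*k+1)) : ℕ) : ZMod 8)) = 0 := by
    apply Finset.sum_eq_zero
    intro k hk
    rw [mem_range] at hk
    have h2k : 2*k+1 ≤ (4*n).sqrt := by omega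
    have hsq4 : (2*k+1)*(2*k+1) ≤ 4*n := by nlinarith
    have hmod : (4*n - (2*k+1)*(2*k+1)) % 4 = 3 := by
      have hx : (2*k+1)*(2*k+1) = 4*(k*k+k)+1 := by ring
      omega
    obtain ⟨t, ht⟩ := four_dvd_over _ hmod
    have htc := congrArg (fun x : ℤ => (x : ZMod 8)) ht
    push_cast at htc
    rw [htc, Even.neg_one_pow (⟨k, by omega⟩ : Even (2*k))]
    calc (2:ZMod 8)*1*(4*(t:ZMod 8)) = 8*(t:ZMod 8) := by ring
      _ = 0 := by rw [show (8:ZMod 8) = 0 from by decide, zero_mul]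
  have hB : (∑ k ∈ range n.sqrt,
      2*(-1)^(2*k+1) * ((overpartition (4*n - (2*k+1+1)*(2*k+1+1)) : ℕ) : ZMod 8))
      = (-1)^n * (overpartition n : ZMod 8) := by
    have hterm : ∀ k ∈ range n.sqrt,
        (2:ZMod 8)*(-1)^(2*k+1) * ((overpartition (4*n - (2*k+1+1)*(2*k+1+1)) : ℕ) : ZMod 8)
        = (-1)^n * (2 * (-1)^k * ((overpartition (n - (k+1)*(k+1)) : ℕ) : ZMod 8)) := by
      intro k hk
      rw [mem_range] at hk
      have hb : (k+1)*(k+1) ≤ n := sq_le_of_lt_sqrt hk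
      have harg : 4*n - (2*k+1+1)*(2*k+1+1) = 4*(n - (k+1)*(k+1)) := by
        have hx : (2*k+1+1)*(2*k+1+1) = 4*((k+1)*(k+1)) := by ring
        omega
      have hone : 1 ≤ (k+1)*(k+1) := Nat.one_le_iff_ne_zero.mpr (Nat.mul_ne_zero (by omega) (by omega))
      rw [harg, ih (n - (k+1)*(k+1)) (by omega)]
      have hparity : ((k+1)*(k+1)) % 2 = (k+1) % 2 := by
        have h3 := Nat.mul_mod (k+1) (k+1) 2
        have h4 : (k+1) % 2 = 0 ∨ (k+1) % 2 = 1 := by omega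
        rcases h4 with h4|h4 <;> rw [h4] at h3 <;> omega
      have hs1 : ((-1:ZMod 8))^(2*k+1) = -1 := Odd.neg_one_pow ⟨k, by omega⟩
      have hs2 : ((-1:ZMod 8))^(n - (k+1)*(k+1)) = (-1)^(n+k+1) := by
        have hz : ((-1:ℤ))^(n - (k+1)*(k+1)) = (-1)^(n+k+1) := signZ (by omega)
        have hc := congrArg (fun x : ℤ => (x : ZMod 8)) hz
        push_cast at hc
        exact hc
      rw [hs1, hs2, show n+k+1 = (n+k)+1 from rfl, pow_succ, pow_add]
      ring
    rw [Finset.sum_congr rfl hterm, ← Finset.mul_sum]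
    congr 1
    have hrecn := over_rec' n hn
    have := congrArg (fun x : ℤ => (x : ZMod 8)) hrecn
    push_cast at this
    rw [← this]
  rw [hA, hB, zero_add]
end
end Overpf

theorem overpartition_mod_eight (n : ℕ) :
    (overpartition n : ℤ) ≡ (-1) ^ n * overpartition (4 * n) [ZMOD 8] := by
  apply (ZMod.intCast_eq_intCast_iff' _ _ _).mp
  push_cast
  rw [Overpf.main_ind n, ← mul_assoc,
    show ((-1:ZMod 8))^n * (-1)^n = 1 from by
      rw [← pow_add]; exact Even.neg_one_pow ⟨n, rfl⟩,
    one_mul]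
end

section
/- For every positive integer n, p̄(n) ≡ (−1)^n · (−2·c₁(n) + 4·c₂(n)) (mod 8), where c₁(n) equals 1 if n is the square of a positive integer and 0 otherwise, and c₂(n) is the number of ordered pairs (a,b) of positive integers with a² + b² = n. -/
/-- `c₁ n = 1` if `n` is the square of a positive integer, and `0` otherwise. -/
noncomputable def c₁ (n : ℕ) : ℕ :=
  Set.ncard {a : ℕ | 0 < a ∧ a ^ 2 = n}

/-- The number of ordered pairs of positive integers whose squares sum to `n`. -/
noncomputable def c₂ (n : ℕ) : ℕ :=
  Set.ncard {x : ℕ × ℕ | 0 < x.1 ∧ 0 < x.2 ∧ x.1 ^ 2 + x.2 ^ 2 = n}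

open Finset PowerSeries



/-- partitions of `j` with parts in `A`, as multisets -/
def MP (A : Finset ℕ) (j : ℕ) : Finset (Multiset ℕ) :=
  ((Finset.univ : Finset (Nat.Partition j)).filter fun π => ∀ i ∈ π.parts, i ∈ A).image
    Nat.Partition.parts

lemma mem_MP {A : Finset ℕ} {j : ℕ} {μ : Multiset ℕ} :
    μ ∈ MP A j ↔ (∀ i ∈ μ, i ∈ A) ∧ (∀ i ∈ μ, 0 < i) ∧ μ.sum = j := by
  constructor
  · intro h
    simp only [MP, mem_image, mem_filter, mem_univ, true_and] at h
    obtain ⟨π, hπ, rfl⟩ := h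
    exact ⟨hπ, fun i hi => π.parts_pos hi, π.parts_sum⟩
  · rintro ⟨h1, h2, h3⟩
    simp only [MP, mem_image, mem_filter, mem_univ, true_and]
    exact ⟨⟨μ, fun {i} hi => h2 i hi, h3⟩, h1, rfl⟩

lemma Multiset.sup_mem_of_ne_zero {μ : Multiset ℕ} (h : μ ≠ 0) : μ.sup ∈ μ := by
  induction μ using Multiset.induction with
  | empty => exact absurd rfl h
  | cons a s ih =>
    rw [Multiset.sup_cons]
    rcases eq_or_ne s 0 with rfl | hs
    · simp
    · rcases le_total a s.sup with h' | h'
      · rw [sup_of_le_right h']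
        exact Multiset.mem_cons_of_mem (ih hs)
      · rw [sup_of_le_left h']
        exact Multiset.mem_cons_self a s


lemma invol_sum (A : Finset ℕ) (hA : ∀ a ∈ A, 0 < a) (n : ℕ) (hn : 0 < n) :
    ∑ x ∈ (A.powerset.filter fun S => ∑ i ∈ S, i ≤ n).sigma
        (fun S => MP A (n - ∑ i ∈ S, i)), ((-1 : ℤ)) ^ x.1.card = 0 := by
  set Ω := (A.powerset.filter fun S => ∑ i ∈ S, i ≤ n).sigma
        (fun S => MP A (n - ∑ i ∈ S, i)) with hΩ
  have hmem : ∀ (S : Finset ℕ) (μ : Multiset ℕ),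
      (⟨S, μ⟩ : (_ : Finset ℕ) × Multiset ℕ) ∈ Ω →
      S ⊆ A ∧ (∀ i ∈ μ, i ∈ A) ∧ (∀ i ∈ μ, 0 < i) ∧ (∑ i ∈ S, i) + μ.sum = n := by
    intro S μ hx
    simp only [hΩ, mem_sigma, mem_filter, mem_powerset, mem_MP] at hx
    obtain ⟨⟨hSA, hSn⟩, hμA, hμpos, hμsum⟩ := hx
    exact ⟨hSA, hμA, hμpos, by omega⟩
  have hmem' : ∀ (S : Finset ℕ) (μ : Multiset ℕ), S ⊆ A → (∀ i ∈ μ, i ∈ A) →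
      (∀ i ∈ μ, 0 < i) → (∑ i ∈ S, i) + μ.sum = n →
      (⟨S, μ⟩ : (_ : Finset ℕ) × Multiset ℕ) ∈ Ω := by
    intro S μ h1 h2 h3 h4
    simp only [hΩ, mem_sigma, mem_filter, mem_powerset, mem_MP]
    exact ⟨⟨h1, by omega⟩, h2, h3, by omega⟩
  -- auxiliary: nonemptiness of S in the second branch
  have hSne' : ∀ (S : Finset ℕ) (μ : Multiset ℕ), (∀ i ∈ μ, 0 < i) →
      ((∑ i ∈ S, i) + μ.sum = n) → ¬ μ.sup > S.sup id → S.Nonempty := by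
    intro S μ hμpos hsum hb
    rcases S.eq_empty_or_nonempty with rfl | h'
    · exfalso
      have hb0 : μ.sup ≤ 0 := by simpa using hb
      have hμ0 : μ = 0 := by
        by_contra h0
        have h1 := hμpos _ (Multiset.sup_mem_of_ne_zero h0)
        omega
      rw [hμ0] at hsum
      simp at hsum
      omega
    · exact h'
  have hsup_mem : ∀ (S : Finset ℕ), S.Nonempty → S.sup id ∈ S := by
    intro S hS
    obtain ⟨b, hb', he⟩ := Finset.exists_mem_eq_sup S hS id
    rw [he]; exact hb'
  refine Finset.sum_involution
    (fun x _ => if x.2.sup > x.1.sup id then ⟨insert x.2.sup x.1, x.2.erase x.2.sup⟩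
      else ⟨x.1.erase (x.1.sup id), (x.1.sup id) ::ₘ x.2⟩) ?_ ?_ ?_ ?_
  -- h : signs cancel
  · rintro ⟨S, μ⟩ hx
    obtain ⟨hSA, hμA, hμpos, hsum⟩ := hmem S μ hx
    by_cases hb : μ.sup > S.sup id
    · have hbS : μ.sup ∉ S := by
        intro hmm
        have h1 := Finset.le_sup (f := id) hmm
        simp only [id_eq] at h1
        omega
      simp only [if_pos hb]
      show (-1 : ℤ) ^ S.card + (-1) ^ (insert μ.sup S).card = 0
      rw [Finset.card_insert_of_notMem hbS, pow_succ]
      ring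
    · have hSne : S.Nonempty := hSne' S μ hμpos hsum hb
      have haS : S.sup id ∈ S := hsup_mem S hSne
      simp only [if_neg hb]
      show (-1 : ℤ) ^ S.card + (-1) ^ (S.erase (S.sup id)).card = 0
      rw [Finset.card_erase_of_mem haS]
      have hcp : 0 < S.card := Finset.card_pos.mpr hSne
      obtain ⟨c, hc⟩ : ∃ c, S.card = c + 1 := ⟨S.card - 1, by omega⟩
      rw [hc, Nat.add_sub_cancel, pow_succ]
      ring
  -- g_ne
  · rintro ⟨S, μ⟩ hx _
    obtain ⟨hSA, hμA, hμpos, hsum⟩ := hmem S μ hx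
    by_cases hb : μ.sup > S.sup id
    · simp only [if_pos hb]
      intro h
      have h1 : insert μ.sup S = S := congrArg Sigma.fst h
      have hbS : μ.sup ∉ S := by
        intro hmm
        have h1 := Finset.le_sup (f := id) hmm
        simp only [id_eq] at h1
        omega
      exact hbS (h1 ▸ Finset.mem_insert_self μ.sup S)
    · simp only [if_neg hb]
      intro h
      have hSne : S.Nonempty := hSne' S μ hμpos hsum hb
      have haS : S.sup id ∈ S := hsup_mem S hSne
      have h1 : S.erase (S.sup id) = S := congrArg Sigma.fst h
      have h2 := Finset.notMem_erase (S.sup id) S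
      rw [h1] at h2
      exact h2 haS
  -- g_mem
  · rintro ⟨S, μ⟩ hx
    obtain ⟨hSA, hμA, hμpos, hsum⟩ := hmem S μ hx
    by_cases hb : μ.sup > S.sup id
    · simp only [if_pos hb]
      have hμ0 : μ ≠ 0 := by rintro rfl; simp at hb
      have hbμ : μ.sup ∈ μ := Multiset.sup_mem_of_ne_zero hμ0
      have hbS : μ.sup ∉ S := by
        intro hmm
        have h1 := Finset.le_sup (f := id) hmm
        simp only [id_eq] at h1
        omega
      apply hmem'
      · intro i hi
        rcases Finset.mem_insert.mp hi with rfl | h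
        · exact hμA _ hbμ
        · exact hSA h
      · intro i hi; exact hμA _ (Multiset.mem_of_mem_erase hi)
      · intro i hi; exact hμpos _ (Multiset.mem_of_mem_erase hi)
      · rw [Finset.sum_insert hbS]
        have h5 : μ.sup + (μ.erase μ.sup).sum = μ.sum := by
          conv_rhs => rw [← Multiset.cons_erase hbμ]
          rw [Multiset.sum_cons]
        omega
    · simp only [if_neg hb]
      have hSne : S.Nonempty := hSne' S μ hμpos hsum hb
      have haS : S.sup id ∈ S := hsup_mem S hSne
      apply hmem'
      · exact fun i hi => hSA (Finset.mem_of_mem_erase hi)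
      · intro i hi
        rcases Multiset.mem_cons.mp hi with rfl | h
        · exact hSA haS
        · exact hμA _ h
      · intro i hi
        rcases Multiset.mem_cons.mp hi with rfl | h
        · exact hA _ (hSA haS)
        · exact hμpos _ h
      · rw [Multiset.sum_cons]
        have h5 : S.sup id + ∑ i ∈ S.erase (S.sup id), i = ∑ i ∈ S, i :=
          Finset.add_sum_erase S (fun i => i) haS
        omega
  -- g_inv
  · rintro ⟨S, μ⟩ hx
    obtain ⟨hSA, hμA, hμpos, hsum⟩ := hmem S μ hx
    by_cases hb : μ.sup > S.sup id
    · simp only [if_pos hb]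
      have hμ0 : μ ≠ 0 := by rintro rfl; simp at hb
      have hbμ : μ.sup ∈ μ := Multiset.sup_mem_of_ne_zero hμ0
      have hbS : μ.sup ∉ S := by
        intro hmm
        have h1 := Finset.le_sup (f := id) hmm
        simp only [id_eq] at h1
        omega
      have hsup1 : (insert μ.sup S).sup id = μ.sup := by
        rw [Finset.sup_insert]
        exact max_eq_left (le_of_lt hb)
      have hsup2 : (μ.erase μ.sup).sup ≤ μ.sup := Multiset.sup_le.mpr
        (fun i hi => Multiset.le_sup (Multiset.mem_of_mem_erase hi))
      rw [if_neg (by rw [hsup1]; omega)]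
      rw [hsup1, Finset.erase_insert hbS, Multiset.cons_erase hbμ]
    · simp only [if_neg hb]
      have hSne : S.Nonempty := hSne' S μ hμpos hsum hb
      have haS : S.sup id ∈ S := hsup_mem S hSne
      have ha1 : 0 < S.sup id := hA _ (hSA haS)
      have hsupc : ((S.sup id) ::ₘ μ).sup = S.sup id := by
        rw [Multiset.sup_cons]
        exact max_eq_left (by omega)
      have herase : (S.erase (S.sup id)).sup id < S.sup id := by
        rw [Finset.sup_lt_iff (by simpa using ha1)]
        intro i hi
        have h1 : i ≤ S.sup id := Finset.le_sup (f := id) (Finset.mem_of_mem_erase hi)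
        have h2 : i ≠ S.sup id := Finset.ne_of_mem_erase hi
        show i < S.sup id
        omega
      rw [if_pos (by rw [hsupc]; exact herase)]
      rw [hsupc, Finset.insert_erase haS, Multiset.erase_cons_head]


lemma MP_zero (A : Finset ℕ) : MP A 0 = {(0 : Multiset ℕ)} := by
  ext μ
  rw [mem_MP, Finset.mem_singleton]
  constructor
  · rintro ⟨-, h2, h3⟩
    rw [Multiset.eq_zero_iff_forall_notMem]
    intro x hx
    have h4 := h2 x hx
    have h5 : x = 0 := by
      by_contra h6
      have h7 : 0 < x := Nat.pos_of_ne_zero h6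
      obtain ⟨μ', hμ'⟩ := Multiset.exists_cons_of_mem hx
      rw [hμ', Multiset.sum_cons] at h3
      omega
    omega
  · rintro rfl
    exact ⟨by simp, by simp, rfl⟩

lemma prod_expand (A : Finset ℕ) : (∏ i ∈ A, (1 - X ^ i) : PowerSeries ℤ)
    = ∑ S ∈ A.powerset, ((-1 : ℤ) ^ S.card) • (X ^ (∑ i ∈ S, i) : PowerSeries ℤ) := by
  have h : ∀ i ∈ A, (1 - X ^ i : PowerSeries ℤ) = -X ^ i + 1 := fun _ _ => by ring
  rw [Finset.prod_congr rfl h, Finset.prod_add]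
  refine Finset.sum_congr rfl fun S hS => ?_
  rw [Finset.prod_const_one, mul_one]
  have h2 : ∀ i ∈ S, (-X ^ i : PowerSeries ℤ) = (-1 : PowerSeries ℤ) * X ^ i :=
    fun _ _ => by ring
  rw [Finset.prod_congr rfl h2, Finset.prod_mul_distrib, Finset.prod_const,
    Finset.prod_pow_eq_pow_sum, zsmul_eq_mul]
  push_cast
  ring

def PA (A : Finset ℕ) : PowerSeries ℤ := PowerSeries.mk fun j => ((MP A j).card : ℤ)

theorem key1 (A : Finset ℕ) (hA : ∀ a ∈ A, 0 < a) :
    (∏ i ∈ A, (1 - X ^ i : PowerSeries ℤ)) * PA A = 1 := by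
  ext n
  rw [prod_expand, Finset.sum_mul]
  have hterm : ∀ S ∈ A.powerset,
      (coeff n) (((-1 : ℤ) ^ S.card • (X ^ (∑ i ∈ S, i) : PowerSeries ℤ)) * PA A)
      = (-1 : ℤ) ^ S.card * (if (∑ i ∈ S, i) ≤ n then ((MP A (n - ∑ i ∈ S, i)).card : ℤ) else 0) := by
    intro S _
    rw [smul_mul_assoc, map_smul, smul_eq_mul]
    congr 1
    rw [mul_comm, PowerSeries.coeff_mul_X_pow']
    split
    · rw [PA, PowerSeries.coeff_mk]
    · rfl
  rw [map_sum, Finset.sum_congr rfl hterm]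
  rcases Nat.eq_zero_or_pos n with rfl | hn
  · rw [PowerSeries.coeff_zero_eq_constantCoeff, map_one]
    have h1 : ∀ S ∈ A.powerset, (-1 : ℤ) ^ S.card *
        (if (∑ i ∈ S, i) ≤ 0 then ((MP A (0 - ∑ i ∈ S, i)).card : ℤ) else 0)
        = if S = ∅ then 1 else 0 := by
      intro S hS
      rw [Finset.mem_powerset] at hS
      by_cases hS0 : S = ∅
      · subst hS0; simp [MP_zero]
      · obtain ⟨a, ha⟩ := Finset.nonempty_iff_ne_empty.mpr hS0
        have : 0 < ∑ i ∈ S, i := Finset.sum_pos' (fun i _ => Nat.zero_le i)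
          ⟨a, ha, hA a (hS ha)⟩
        rw [if_neg (by omega), if_neg hS0, mul_zero]
    rw [Finset.sum_congr rfl h1, Finset.sum_ite_eq' A.powerset ∅ (fun _ => (1 : ℤ))]
    simp
  · rw [PowerSeries.coeff_one, if_neg (by omega)]
    have h2 : ∀ S ∈ A.powerset, (-1 : ℤ) ^ S.card *
        (if (∑ i ∈ S, i) ≤ n then ((MP A (n - ∑ i ∈ S, i)).card : ℤ) else 0)
        = if (∑ i ∈ S, i) ≤ n then (-1 : ℤ) ^ S.card * ((MP A (n - ∑ i ∈ S, i)).card : ℤ) else 0 := by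
      intro S _
      split <;> simp
    rw [Finset.sum_congr rfl h2, ← Finset.sum_filter]
    have h3 : ∀ S ∈ A.powerset.filter (fun S => ∑ i ∈ S, i ≤ n),
        (-1 : ℤ) ^ S.card * ((MP A (n - ∑ i ∈ S, i)).card : ℤ)
        = ∑ μ ∈ MP A (n - ∑ i ∈ S, i), (-1 : ℤ) ^ S.card := by
      intro S _
      rw [Finset.sum_const, nsmul_eq_mul, mul_comm]
    rw [Finset.sum_congr rfl h3, Finset.sum_sigma']
    exact invol_sum A hA n hn


-- A5 : coefficients of PA (Icc 1 N) are partition numbers, for j ≤ N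
lemma PA_coeff (N j : ℕ) (h : j ≤ N) :
    (coeff j) (PA (Finset.Icc 1 N)) = (Fintype.card (Nat.Partition j) : ℤ) := by
  rw [PA, coeff_mk]
  norm_cast
  rw [MP]
  have hfil : ((Finset.univ : Finset (Nat.Partition j)).filter
      fun π => ∀ i ∈ π.parts, i ∈ Finset.Icc 1 N) = Finset.univ := by
    rw [Finset.filter_true_of_mem]
    intro π _ i hi
    rw [Finset.mem_Icc]
    have h1 := π.parts_pos hi
    have h2 : i ≤ π.parts.sum := Multiset.single_le_sum (fun x _ => Nat.zero_le x) i hi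
    rw [π.parts_sum] at h2
    omega
  rw [hfil, Finset.card_image_of_injective _ (fun π π' hh => ?_), Finset.card_univ]
  cases π; cases π'; simpa using hh

-- A4 : coefficients of ∏ (1+X^i) are numbers of distinct partitions, j ≤ N
lemma prod_expand_plus (A : Finset ℕ) : (∏ i ∈ A, (1 + X ^ i) : PowerSeries ℤ)
    = ∑ S ∈ A.powerset, (X ^ (∑ i ∈ S, i) : PowerSeries ℤ) := by
  have h : ∀ i ∈ A, (1 + X ^ i : PowerSeries ℤ) = X ^ i + 1 := fun _ _ => by ring
  rw [Finset.prod_congr rfl h, Finset.prod_add]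
  refine Finset.sum_congr rfl fun S hS => ?_
  rw [Finset.prod_const_one, mul_one, Finset.prod_pow_eq_pow_sum]

lemma D_coeff (N j : ℕ) (h : j ≤ N) :
    (coeff j) (∏ i ∈ Finset.Icc 1 N, (1 + X ^ i : PowerSeries ℤ))
    = ((Nat.Partition.distincts j).card : ℤ) := by
  rw [prod_expand_plus, map_sum]
  have h1 : ∀ S ∈ (Finset.Icc 1 N).powerset,
      (coeff j) (X ^ (∑ i ∈ S, i) : PowerSeries ℤ) = if (∑ i ∈ S, i) = j then 1 else 0 := by
    intro S _
    rw [PowerSeries.coeff_X_pow]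
    by_cases hc : (∑ i ∈ S, i) = j
    · rw [if_pos hc, if_pos hc.symm]
    · rw [if_neg hc, if_neg (fun hh => hc hh.symm)]
  rw [Finset.sum_congr rfl h1, ← Finset.sum_filter]
  rw [Finset.sum_const, nsmul_eq_mul, mul_one]
  norm_cast
  apply Finset.card_bij (fun S hS => (⟨S.val,
      fun {i} hi => by
        rw [Finset.mem_filter, Finset.mem_powerset] at hS
        have h2 := hS.1 hi
        rw [Finset.mem_Icc] at h2
        omega,
      by
        rw [Finset.mem_filter] at hS
        simpa using hS.2⟩ : Nat.Partition j))
  · -- membership in distincts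
    intro S hS
    rw [Nat.Partition.distincts, Finset.mem_filter]
    exact ⟨Finset.mem_univ _, S.nodup⟩
  · -- injective
    intro S hS S' hS' hh
    have := congrArg Nat.Partition.parts hh
    exact Finset.val_injective this
  · -- surjective
    intro π hπ
    rw [Nat.Partition.distincts, Finset.mem_filter] at hπ
    refine ⟨⟨π.parts, hπ.2⟩, ?_, ?_⟩
    · rw [Finset.mem_filter, Finset.mem_powerset]
      constructor
      · intro i hi
        rw [Finset.mem_Icc]
        have hi' : i ∈ π.parts := hi
        have h1 := π.parts_pos hi'
        have h2 : i ≤ π.parts.sum := Multiset.single_le_sum (fun x _ => Nat.zero_le x) i hi'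
        rw [π.parts_sum] at h2
        omega
      · show Multiset.sum (Multiset.map id π.parts) = j
        rw [Multiset.map_id]
        exact π.parts_sum
    · cases π; rfl


noncomputable def gb : ℕ → ℕ → PowerSeries ℤ
  | 0, 0 => 1
  | 0, _+1 => 0
  | m+1, 0 => gb m 0
  | m+1, r+1 => gb m (r+1) + X ^ (2*(m-r)) * gb m r

lemma gb_succ_succ (m r : ℕ) : gb (m+1) (r+1) = gb m (r+1) + X ^ (2*(m-r)) * gb m r := rfl

lemma gb_big : ∀ m r, m < r → gb m r = 0
  | 0, _+1, _ => rfl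
  | m+1, r+1, h => by
    rw [gb_succ_succ, gb_big m (r+1) (by omega), gb_big m r (by omega), mul_zero, add_zero]

lemma gb_zero_r : ∀ m, gb m 0 = 1
  | 0 => rfl
  | m+1 => gb_zero_r m

lemma gb_diag : ∀ m, gb m m = 1
  | 0 => rfl
  | m+1 => by
    rw [gb_succ_succ, gb_big m (m+1) (by omega), gb_diag m]
    simp

noncomputable def Sf (m : ℕ) (z w : PowerSeries ℤ) (j : ℕ) : PowerSeries ℤ :=
  (-1)^j * X^(j*(j-1)) * gb m j * z^j * w^(m-j)

lemma jmul : ∀ j : ℕ, j*(j+1) = j*(j-1) + 2*j := fun j => by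
  cases j with
  | zero => rfl
  | succ k => simp [Nat.succ_sub_one]; ring

theorem finBin (m : ℕ) (z w : PowerSeries ℤ) :
    ∏ i ∈ Finset.range m, (w - z * X ^ (2*i)) = ∑ j ∈ Finset.range (m+1), Sf m z w j := by
  induction m with
  | zero => simp [Sf, gb_zero_r]
  | succ m ih =>
    rw [Finset.prod_range_succ, ih, Finset.sum_range_succ' (f := Sf (m+1) z w)]
    -- h1 : termwise split of Sf (m+1) z w (j+1)
    have h1 : ∀ j ∈ Finset.range (m+1), Sf (m+1) z w (j+1)
        = ((-1)^(j+1) * X^(j*(j+1)) * gb m (j+1) * z^(j+1) * w^(m-j))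
          + (-(z * X^(2*m))) * Sf m z w j := by
      intro j hj
      rw [Finset.mem_range] at hj
      have hjm : j ≤ m := by omega
      rw [Sf, Sf, gb_succ_succ]
      have e1 : (j+1) * ((j+1) - 1) = j*(j+1) := by rw [Nat.add_sub_cancel, Nat.mul_comm]
      have e2 : m+1 - (j+1) = m - j := by omega
      have e3 : j*(j+1) + 2*(m-j) = j*(j-1) + 2*m := by
        have := jmul j
        omega
      rw [e1, e2]
      have e4 : (X : PowerSeries ℤ)^(j*(j+1)) * X^(2*(m-j)) = X^(j*(j-1)) * X^(2*m) := by
        rw [← pow_add, ← pow_add, e3]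
      calc (-1)^(j+1) * X^(j*(j+1)) * (gb m (j+1) + X^(2*(m-j)) * gb m j) * z^(j+1) * w^(m-j)
          = (-1)^(j+1) * X^(j*(j+1)) * gb m (j+1) * z^(j+1) * w^(m-j)
            + (-1)^(j+1) * (X^(j*(j+1)) * X^(2*(m-j))) * gb m j * z^(j+1) * w^(m-j) := by ring
        _ = _ := by
            rw [e4, pow_succ (-1 : PowerSeries ℤ), pow_succ z]
            ring
    rw [Finset.sum_congr rfl h1, Finset.sum_add_distrib, ← Finset.mul_sum]
    -- h2 : the U-part plus the j=0 term re-assembles to w * (old sum)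
    have h2 : (∑ j ∈ Finset.range (m+1), ((-1)^(j+1) * X^(j*(j+1)) * gb m (j+1) * z^(j+1) * w^(m-j)))
        + Sf (m+1) z w 0 = w * ∑ j ∈ Finset.range (m+1), Sf m z w j := by
      have h2a : ∀ j ∈ Finset.range (m+1),
          ((-1)^(j+1) * X^(j*(j+1)) * gb m (j+1) * z^(j+1) * w^(m-j))
          = (fun j => (-1)^j * X^(j*(j-1)) * gb m j * z^j * w^(m+1-j)) (j+1) := by
        intro j hj
        simp only
        have e1 : (j+1) * ((j+1) - 1) = j*(j+1) := by rw [Nat.add_sub_cancel, Nat.mul_comm]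
        have e2 : m+1 - (j+1) = m - j := by omega
        rw [e1, e2]
      have h2b : Sf (m+1) z w 0
          = (fun j => (-1)^j * X^(j*(j-1)) * gb m j * z^j * w^(m+1-j)) 0 := by
        simp only [Sf]
        rw [show gb (m+1) 0 = gb m 0 from rfl]
      rw [Finset.sum_congr rfl h2a, h2b,
        ← Finset.sum_range_succ' (fun j => (-1)^j * X^(j*(j-1)) * gb m j * z^j * w^(m+1-j)) (m+1),
        Finset.sum_range_succ (fun j => (-1)^j * X^(j*(j-1)) * gb m j * z^j * w^(m+1-j)) (m+1),
        gb_big m (m+1) (by omega)]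
      simp only [mul_zero, zero_mul, add_zero]
      rw [Finset.mul_sum]
      refine Finset.sum_congr rfl fun j hj => ?_
      rw [Finset.mem_range] at hj
      have e5 : m + 1 - j = (m - j) + 1 := by omega
      rw [Sf, e5, pow_succ]
      ring
    linear_combination -h2


noncomputable def F2 (j : ℕ) : PowerSeries ℤ := ∏ i ∈ Finset.Icc 1 j, (1 - X^(2*i))
noncomputable def Fodd (N : ℕ) : PowerSeries ℤ := ∏ i ∈ Finset.range N, (1 - X^(2*i+1))

lemma F2_zero : F2 0 = 1 := by simp [F2]

lemma F2_succ (j : ℕ) : F2 (j+1) = F2 j * (1 - X^(2*(j+1))) := by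
  rw [F2, F2, Finset.prod_Icc_succ_top (by omega)]

theorem gb_mul : ∀ m r, r ≤ m → gb m r * F2 r * F2 (m - r) = F2 m := by
  intro m
  induction m with
  | zero => intro r hr; interval_cases r; simp [gb_zero_r, F2_zero]
  | succ m ih =>
    intro r hr
    match r with
    | 0 => simp [gb_zero_r, F2_zero]
    | r+1 =>
      rcases eq_or_lt_of_le hr with he | hlt
      · rw [← he, gb_diag]
        simp [F2_zero]
      · have hrm : r + 1 ≤ m := by omega
        have hrm' : r ≤ m := by omega
        have IH1 := ih (r+1) hrm
        have IH2 := ih r hrm'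
        have e2 : m + 1 - (r+1) = m - r := by omega
        have hFr : F2 (r+1) = F2 r * (1 - X^(2*(r+1))) := F2_succ r
        have hFc : F2 (m - r) = F2 (m - (r+1)) * (1 - X^(2*(m-r))) := by
          have e3 : m - (r+1) + 1 = m - r := by omega
          rw [← e3, F2_succ, e3]
        have hF2m : F2 (m+1) = F2 m * (1 - X^(2*(m+1))) := F2_succ m
        have hE : (X : PowerSeries ℤ)^(2*(m-r)) * X^(2*(r+1)) = X^(2*(m+1)) := by
          rw [← pow_add]
          congr 1
          omega
        rw [e2, gb_succ_succ]
        linear_combination (1 - X^(2*(m-r))) * IH1 + (X^(2*(m-r)) * (1 - X^(2*(r+1)))) * IH2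
          + (X^(2*(m-r)) * gb m r * F2 (m-r)) * hFr + (gb m (r+1) * F2 (r+1)) * hFc
          + (-1 : PowerSeries ℤ) * hF2m + (-(F2 m)) * hE

lemma sum_odds (N : ℕ) : ∑ i ∈ Finset.range N, (2*i+1) = N^2 := by
  induction N with
  | zero => rfl
  | succ N ih => rw [Finset.sum_range_succ, ih]; ring

theorem gaussFin (N : ℕ) :
    ∑ j ∈ Finset.range (2*N+1), (-1)^(j+N) * X^((Nat.dist j N)^2) * gb (2*N) j
      = Fodd N ^ 2 := by
  have hbin := finBin (2*N) X (X^(2*N))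
  -- LHS product transform
  have hL : ∏ i ∈ Finset.range (2*N), ((X : PowerSeries ℤ)^(2*N) - X * X^(2*i))
      = (-1)^N * X^(3*N^2) * Fodd N^2 := by
    have hsplit : 2*N = N + N := by ring
    rw [hsplit, Finset.prod_range_add]
    have h1 : ∀ i ∈ Finset.range N, ((X : PowerSeries ℤ)^(N+N) - X * X^(2*i))
        = (-1) * (X^(2*i+1) * (1 - X^(2*(N-1-i)+1))) := by
      intro i hi
      rw [Finset.mem_range] at hi
      have e : 2*i+1 + (2*(N-1-i)+1) = N + N := by omega
      have : (X : PowerSeries ℤ)^(2*i+1) * X^(2*(N-1-i)+1) = X^(N+N) := by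
        rw [← pow_add, e]
      have e2 : X * (X : PowerSeries ℤ)^(2*i) = X^(2*i+1) := by
        rw [← pow_succ']
      rw [e2]
      linear_combination -this
    have h2 : ∀ i ∈ Finset.range N, ((X : PowerSeries ℤ)^(N+N) - X * X^(2*(N+i)))
        = X^(N+N) * (1 - X^(2*i+1)) := by
      intro i hi
      have : (X : PowerSeries ℤ)^(N+N) * X^(2*i+1) = X * X^(2*(N+i)) := by
        rw [← pow_succ', ← pow_add]
        congr 1
        omega
      linear_combination -this
    rw [Finset.prod_congr rfl h1, Finset.prod_congr rfl h2]
    have hrefl : ∏ i ∈ Finset.range N, (1 - (X : PowerSeries ℤ)^(2*(N-1-i)+1)) = Fodd N := by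
      rw [Fodd]
      exact Finset.prod_range_reflect (fun j => 1 - X^(2*j+1)) N
    have hA : ∏ i ∈ Finset.range N, (-1 : PowerSeries ℤ) * (X^(2*i+1) * (1 - X^(2*(N-1-i)+1)))
        = (-1)^N * (X^(N^2) * Fodd N) := by
      rw [Finset.prod_mul_distrib, Finset.prod_mul_distrib, Finset.prod_const,
        Finset.card_range, Finset.prod_pow_eq_pow_sum, sum_odds, hrefl]
    have hB : ∏ i ∈ Finset.range N, ((X : PowerSeries ℤ)^(N+N) * (1 - X^(2*i+1)))
        = X^((N+N)*N) * Fodd N := by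
      rw [Finset.prod_mul_distrib, Finset.prod_const, Finset.card_range, ← pow_mul, Fodd]
    rw [hA, hB]
    have e7 : (X : PowerSeries ℤ)^(N^2) * X^((N+N)*N) = X^(3*N^2) := by
      rw [← pow_add]
      congr 1
      ring
    calc (-1)^N * ((X:PowerSeries ℤ)^(N^2) * Fodd N) * (X^((N+N)*N) * Fodd N)
        = (-1)^N * ((X:PowerSeries ℤ)^(N^2) * X^((N+N)*N)) * Fodd N^2 := by ring
      _ = (-1)^N * X^(3*N^2) * Fodd N^2 := by rw [e7]
  -- RHS termwise transform
  have hR : ∀ j ∈ Finset.range (2*N+1), Sf (2*N) X (X^(2*N)) j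
      = ((-1 : PowerSeries ℤ)^N * X^(3*N^2)) * ((-1)^(j+N) * X^((Nat.dist j N)^2) * gb (2*N) j) := by
    intro j hj
    rw [Finset.mem_range] at hj
    have hj2 : j ≤ 2*N := by omega
    rw [Sf, ← pow_mul]
    have hsign : ((-1 : PowerSeries ℤ))^N * (-1)^(j+N) = (-1)^j := by
      rw [← pow_add]
      have e : N + (j + N) = j + 2*N := by omega
      rw [e, pow_add, pow_mul]
      norm_num
    have hexp : j*(j-1) + j + 2*N*(2*N-j) = (Nat.dist j N)^2 + 3*N^2 := by
      rcases Nat.eq_zero_or_pos j with rfl | hj1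
      · simp [Nat.dist]
        ring
      · rcases Nat.le_total j N with h | h
        · have hd : Nat.dist j N = N - j := by
            rw [Nat.dist_eq_sub_of_le h]
          rw [hd]
          zify [h, hj2, hj1]
          ring
        · have hd : Nat.dist j N = j - N := by
            rw [Nat.dist_eq_sub_of_le_right h]
          rw [hd]
          zify [h, hj2, hj1]
          ring
    calc (-1)^j * X^(j*(j-1)) * gb (2*N) j * X^j * (X:PowerSeries ℤ)^(2*N*(2*N - j))
        = (-1)^j * X^(j*(j-1) + j + 2*N*(2*N-j)) * gb (2*N) j := by
          rw [pow_add, pow_add]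
          ring
      _ = _ := by
          rw [hexp, ← hsign, pow_add]
          ring
  rw [hL, Finset.sum_congr rfl hR, ← Finset.mul_sum] at hbin
  have hne : ((-1 : PowerSeries ℤ)^N * X^(3*N^2)) ≠ 0 := by
    apply mul_ne_zero
    · exact pow_ne_zero _ (by norm_num)
    · exact pow_ne_zero _ PowerSeries.X_ne_zero
  exact (mul_left_cancel₀ hne hbin).symm


-- ============ axioms from previous sections (to be merged) ============
-- ======================================================================

lemma nat_dist_def (a b : ℕ) : Nat.dist a b = (a - b) + (b - a) := rfl

noncomputable def Pser : PowerSeries ℤ := PowerSeries.mk fun j => (Fintype.card (Nat.Partition j) : ℤ)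
noncomputable def Dser : PowerSeries ℤ := PowerSeries.mk fun j => ((Nat.Partition.distincts j).card : ℤ)
noncomputable def Pbar : PowerSeries ℤ := PowerSeries.mk fun j => (overpartition j : ℤ)

lemma Pbar_eq : Pbar = Dser * Pser := by
  ext n
  rw [Pbar, coeff_mk, PowerSeries.coeff_mul,
    Finset.Nat.sum_antidiagonal_eq_sum_range_succ_mk]
  rw [overpartition]
  push_cast
  refine Finset.sum_congr rfl fun m hm => ?_
  rw [Dser, Pser, coeff_mk, coeff_mk]

section Quot
variable (n : ℕ)

noncomputable abbrev II (n : ℕ) : Ideal (PowerSeries ℤ) := Ideal.span {(X : PowerSeries ℤ)^(n+1)}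
noncomputable abbrev ψ (n : ℕ) : PowerSeries ℤ →+* (PowerSeries ℤ ⧸ II n) := Ideal.Quotient.mk (II n)

lemma psi_congr {n : ℕ} {a b : PowerSeries ℤ} (h : ∀ m, m ≤ n → coeff m a = coeff m b) :
    ψ n a = ψ n b := by
  rw [Ideal.Quotient.mk_eq_mk_iff_sub_mem, Ideal.mem_span_singleton]
  rw [PowerSeries.X_pow_dvd_iff]
  intro m hm
  rw [map_sub, h m (by omega), sub_self]

lemma coeff_eq_of_psi_eq {n : ℕ} {a b : PowerSeries ℤ} (h : ψ n a = ψ n b) :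
    ∀ m, m ≤ n → coeff m a = coeff m b := by
  rw [Ideal.Quotient.mk_eq_mk_iff_sub_mem, Ideal.mem_span_singleton,
    PowerSeries.X_pow_dvd_iff] at h
  intro m hm
  have := h m (by omega)
  rw [map_sub, sub_eq_zero] at this
  exact this

lemma psi_Xpow {n m : ℕ} (h : n < m) : ψ n ((X : PowerSeries ℤ)^m) = 0 := by
  rw [Ideal.Quotient.eq_zero_iff_mem, Ideal.mem_span_singleton]
  exact pow_dvd_pow X (by omega)

lemma psi_prod_tail {n : ℕ} {ι : Type} (s t : Finset ι) (hst : s ⊆ t) (e : ι → ℕ)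
    (he : ∀ i ∈ t, i ∉ s → n < e i) :
    ψ n (∏ i ∈ t, (1 - X^(e i))) = ψ n (∏ i ∈ s, (1 - X^(e i))) := by
  rw [map_prod, map_prod]
  symm
  apply Finset.prod_subset hst
  intro i hit his
  rw [map_sub, map_one, map_pow]
  rw [← map_pow, psi_Xpow (he i hit his), sub_zero]

end Quot

lemma negOnePow_mod (a b : ℕ) (h : a % 2 = b % 2) : ((-1:ℤ))^a = (-1)^b := by
  have key : ∀ c : ℕ, ((-1:ℤ))^c = (-1)^(c % 2) := by
    intro c
    conv_lhs => rw [← Nat.div_add_mod c 2]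
    rw [pow_add, pow_mul]
    norm_num
  rw [key a, key b, h]

lemma sum_split (M : ℕ) (g : ℕ → ℤ) :
    ∑ j ∈ Finset.range (2*M+1), (-1:ℤ)^(j+M) * g (Nat.dist j M)
      = g 0 + 2 * ∑ j ∈ Finset.range M, (-1)^(j+1) * g (j+1) := by
  rw [show 2*M+1 = M + (M+1) by omega, Finset.sum_range_add]
  rw [Finset.sum_range_succ' (fun x => ((-1:ℤ))^(M + x + M) * g (Nat.dist (M+x) M)) M]
  rw [← Finset.sum_range_reflect (fun j => ((-1:ℤ))^(j+M) * g (Nat.dist j M)) M]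
  have hz : ((-1:ℤ))^(M + 0 + M) * g (Nat.dist (M+0) M) = g 0 := by
    have hd : Nat.dist (M+0) M = 0 := by rw [nat_dist_def]; omega
    have hs : ((-1:ℤ))^(M + 0 + M) = (-1)^(0:ℕ) := negOnePow_mod _ _ (by omega)
    rw [hd, hs, pow_zero, one_mul]
  have ht1 : ∀ j ∈ Finset.range M, ((-1:ℤ))^((M-1-j)+M) * g (Nat.dist (M-1-j) M)
      = (-1)^(j+1) * g (j+1) := by
    intro j hj
    rw [Finset.mem_range] at hj
    have hd : Nat.dist (M-1-j) M = j+1 := by rw [nat_dist_def]; omega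
    have hs : ((-1:ℤ))^((M-1-j)+M) = (-1)^(j+1) := negOnePow_mod _ _ (by omega)
    rw [hd, hs]
  have ht2 : ∀ j ∈ Finset.range M, ((-1:ℤ))^(M + (j+1) + M) * g (Nat.dist (M+(j+1)) M)
      = (-1)^(j+1) * g (j+1) := by
    intro j hj
    have hd : Nat.dist (M+(j+1)) M = j+1 := by rw [nat_dist_def]; omega
    have hs : ((-1:ℤ))^(M + (j+1) + M) = (-1)^(j+1) := negOnePow_mod _ _ (by omega)
    rw [hd, hs]
  rw [Finset.sum_congr rfl ht1, Finset.sum_congr rfl ht2, hz]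
  ring

theorem recurrence (n : ℕ) (hn : 0 < n) :
    (overpartition n : ℤ)
      + 2 * ∑ j ∈ Finset.range (2*n), (-1)^(j+1)
          * (if (j+1)^2 ≤ n then (overpartition (n - (j+1)^2) : ℤ) else 0) = 0 := by
  set M := 2*n with hM
  -- the even-part inverse
  set Aev : Finset ℕ := (Finset.Icc 1 n).image (fun i => 2*i) with hAev
  have hF2PA : F2 n * PA Aev = 1 := by
    have himg : (∏ a ∈ Aev, (1 - X^a : PowerSeries ℤ)) = ∏ i ∈ Finset.Icc 1 n, (1 - X^(2*i)) :=
      Finset.prod_image (fun a _ b _ h => by omega)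
    rw [F2, ← himg]
    apply key1
    intro a ha
    rw [hAev, Finset.mem_image] at ha
    obtain ⟨i, hi, rfl⟩ := ha
    rw [Finset.mem_Icc] at hi
    omega
  set u := ψ n (F2 n) with hu
  set v := ψ n (PA Aev) with hv
  have huv : u * v = 1 := by rw [hu, hv, ← map_mul, hF2PA, map_one]
  -- F2 congruences
  have hF2c : ∀ j, n ≤ j → ψ n (F2 j) = u := by
    intro j hj
    rw [hu, F2, F2]
    apply psi_prod_tail (Finset.Icc 1 n) (Finset.Icc 1 j)
      (Finset.Icc_subset_Icc_right hj)
    intro i hit his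
    rw [Finset.mem_Icc] at hit his
    omega
  -- gb values in the quotient
  have hgb : ∀ j, j ≤ 2*M → n ≤ j → n ≤ 2*M - j → ψ n (gb (2*M) j) = v := by
    intro j hj h1 h2
    have hkey := gb_mul (2*M) j hj
    have := congrArg (ψ n) hkey
    rw [map_mul, map_mul, hF2c j h1, hF2c (2*M - j) h2, hF2c (2*M) (by omega)] at this
    calc ψ n (gb (2*M) j) = ψ n (gb (2*M) j) * ((u*v)*(u*v)) := by rw [huv]; ring
      _ = (ψ n (gb (2*M) j) * u * u) * (v * v) := by ring
      _ = u * (v * v) := by rw [this]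
      _ = (u * v) * v := by ring
      _ = v := by rw [huv, one_mul]
  -- Theta
  set Θ : PowerSeries ℤ := ∑ j ∈ Finset.range (2*M+1),
    ((-1 : ℤ)^(j+M)) • ((X : PowerSeries ℤ)^((Nat.dist j M)^2)) with hΘ
  -- S1 : ψ Θ * v = ψ (Fodd M ^ 2)
  have hS1 : ψ n Θ * v = ψ n (Fodd M ^ 2) := by
    rw [← gaussFin M, hΘ, map_sum, map_sum, Finset.sum_mul]
    refine Finset.sum_congr rfl fun j hj => ?_
    rw [Finset.mem_range] at hj
    set k := Nat.dist j M with hk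
    by_cases hkn : k^2 ≤ n
    · have hkn' : k ≤ n := le_trans (Nat.le_self_pow (by omega) k) hkn
      have hjj : n ≤ j ∧ n ≤ 2*M - j := by
        rw [nat_dist_def] at hk
        constructor <;> omega
      rw [map_mul, map_mul, hgb j (by omega) hjj.1 hjj.2, map_zsmul, zsmul_eq_mul]
      rw [show ((-1 : PowerSeries ℤ))^(j+M) = (((-1 : ℤ)^(j+M) : ℤ) : PowerSeries ℤ) by
        push_cast; ring, map_intCast]
    · -- both sides are zero
      have h0 : ψ n ((X : PowerSeries ℤ)^(k^2)) = 0 := psi_Xpow (by omega)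
      rw [map_zsmul, h0, smul_zero, zero_mul, map_mul, map_mul, h0, mul_zero, zero_mul]
  -- odd-even split of the full product
  have hGF : (∏ i ∈ Finset.Icc 1 n, (1 + X^i : PowerSeries ℤ))
      * (∏ i ∈ Finset.Icc 1 n, (1 - X^i : PowerSeries ℤ)) = F2 n := by
    rw [← Finset.prod_mul_distrib, F2]
    refine Finset.prod_congr rfl fun i _ => ?_
    have : (X : PowerSeries ℤ)^(2*i) = X^i * X^i := by rw [two_mul, pow_add]
    linear_combination this
  have hsplitIcc : Finset.Icc 1 (2*n) =
      ((Finset.range n).image fun j => 2*j+1) ∪ ((Finset.Icc 1 n).image fun i => 2*i) := by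
    ext a
    simp only [Finset.mem_Icc, Finset.mem_union, Finset.mem_image, Finset.mem_range]
    constructor
    · rintro ⟨h1, h2⟩
      rcases Nat.even_or_odd a with ⟨c, hc⟩ | ⟨c, hc⟩
      · exact Or.inr ⟨c, by omega, by omega⟩
      · exact Or.inl ⟨c, by omega, by omega⟩
    · rintro (⟨j, hj, rfl⟩ | ⟨i, hi, rfl⟩) <;> omega
  have hFbig : (∏ i ∈ Finset.Icc 1 (2*n), (1 - X^i : PowerSeries ℤ)) = Fodd n * F2 n := by
    rw [hsplitIcc, Finset.prod_union (by
      rw [Finset.disjoint_left]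
      rintro a ha hb
      rw [Finset.mem_image] at ha hb
      obtain ⟨j, _, rfl⟩ := ha
      obtain ⟨i, _, hi⟩ := hb
      omega)]
    congr 1
    · rw [Fodd, Finset.prod_image (fun a _ b _ h => by omega)]
    · rw [F2, Finset.prod_image (fun a _ b _ h => by omega)]
  -- quotient values
  set f := ψ n (∏ i ∈ Finset.Icc 1 n, (1 - X^i : PowerSeries ℤ)) with hf
  set w := ψ n (PA (Finset.Icc 1 n)) with hw
  have hfw : f * w = 1 := by
    rw [hf, hw, ← map_mul, key1 _ (fun a ha => by rw [Finset.mem_Icc] at ha; omega), map_one]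
  set o := ψ n (Fodd n) with ho
  have hoM : ψ n (Fodd M) = o := by
    rw [ho, Fodd, Fodd]
    apply psi_prod_tail (Finset.range n) (Finset.range M) (by
      apply Finset.range_subset_range.mpr; omega)
    intro i hit his
    rw [Finset.mem_range] at hit his
    omega
  have hFbigc : ψ n (∏ i ∈ Finset.Icc 1 (2*n), (1 - X^i : PowerSeries ℤ)) = f := by
    rw [hf]
    apply psi_prod_tail (Finset.Icc 1 n) (Finset.Icc 1 (2*n))
      (Finset.Icc_subset_Icc_right (by omega))
    intro i hit his
    rw [Finset.mem_Icc] at hit his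
    omega
  have hou : o * u = f := by
    rw [← hFbigc, hFbig, map_mul, ho, hu]
  set g := ψ n (∏ i ∈ Finset.Icc 1 n, (1 + X^i : PowerSeries ℤ)) with hg
  have hgf : g * f = u := by rw [hg, hf, hu, ← map_mul, hGF]
  -- final quotient identity
  have hψD : ψ n Dser = g := by
    rw [hg]
    apply psi_congr
    intro m hm
    rw [Dser, coeff_mk, D_coeff n m hm]
  have hψP : ψ n Pser = w := by
    rw [hw]
    apply psi_congr
    intro m hm
    rw [Pser, coeff_mk, PA_coeff n m hm]
  have hS1' : ψ n Θ * v = o * o := by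
    rw [hS1, map_pow, hoM]
    ring
  have hΘval : ψ n Θ = (o * o) * u := by
    calc ψ n Θ = ψ n Θ * (u * v) := by rw [huv, mul_one]
      _ = (ψ n Θ * v) * u := by ring
      _ = (o * o) * u := by rw [hS1']
  have e1 : o * g * f = f := by
    rw [show o * g * f = o * (g * f) by ring, hgf, hou]
  have hmain : ψ n (Θ * Pbar) = 1 := by
    rw [Pbar_eq, map_mul, map_mul, hψD, hψP, hΘval]
    calc (o * o) * u * (g * w) = (o*g*f) * (o*g) * w := by rw [← hgf]; ring
      _ = f * (o*g) * w := by rw [e1]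
      _ = (o*g*f) * w := by ring
      _ = f * w := by rw [e1]
      _ = 1 := hfw
  -- coefficient extraction
  have hcn : coeff n (Θ * Pbar) = coeff n 1 :=
    coeff_eq_of_psi_eq (by rw [hmain, map_one]) n le_rfl
  rw [PowerSeries.coeff_one, if_neg (by omega)] at hcn
  rw [hΘ, Finset.sum_mul, map_sum] at hcn
  have hterm : ∀ j ∈ Finset.range (2*M+1),
      coeff n ((((-1 : ℤ)^(j+M)) • ((X : PowerSeries ℤ)^((Nat.dist j M)^2))) * Pbar)
      = (-1 : ℤ)^(j+M) * (if (Nat.dist j M)^2 ≤ n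
          then (overpartition (n - (Nat.dist j M)^2) : ℤ) else 0) := by
    intro j _
    rw [smul_mul_assoc, map_smul, smul_eq_mul]
    congr 1
    rw [mul_comm, PowerSeries.coeff_mul_X_pow']
    split
    · rw [Pbar, coeff_mk]
    · rfl
  rw [Finset.sum_congr rfl hterm] at hcn
  rw [sum_split M (fun k => if k^2 ≤ n then (overpartition (n - k^2) : ℤ) else 0)] at hcn
  beta_reduce at hcn
  rw [show (0:ℕ)^2 = 0 from rfl, Nat.sub_zero, if_pos (Nat.zero_le n)] at hcn
  exact hcn


lemma op_zero : overpartition 0 = 1 := by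
  rw [overpartition, Finset.sum_range_one]
  have h1 : Fintype.card (Nat.Partition 0) = 1 := by simp
  have h2 : (Nat.Partition.distincts 0).card = 1 := by
    rw [Nat.Partition.distincts, Finset.filter_true_of_mem ?_]
    · rw [Finset.card_univ, h1]
    · intro π _
      have hp : π.parts = 0 := by
        by_contra h0
        obtain ⟨a, ha⟩ := Multiset.exists_mem_of_ne_zero h0
        have h3 := π.parts_pos ha
        have h4 := π.parts_sum
        obtain ⟨μ, hμ⟩ := Multiset.exists_cons_of_mem ha
        rw [hμ, Multiset.sum_cons] at h4
        omega
      rw [hp]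
      exact Multiset.nodup_zero
  rw [h1, h2]

lemma c1_zero : c₁ 0 = 0 := by
  rw [c₁]
  convert Set.ncard_empty ℕ
  ext a
  simp only [Set.mem_setOf_eq, Set.mem_empty_iff_false, iff_false, not_and]
  intro h h2
  exact absurd h2 (pow_ne_zero 2 (by omega))

lemma hc1 (n : ℕ) (hn : 0 < n) (m : ℕ) (hm : m ≤ n) :
    (c₁ m : ℤ) = ∑ j ∈ Finset.range (2*n), (if (j+1)^2 = m then 1 else 0) := by
  have hset : {a : ℕ | 0 < a ∧ a ^ 2 = m}
      = ↑(((Finset.range (2*n)).image (fun j => j+1)).filter (fun a => a^2 = m)) := by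
    ext a
    simp only [Set.mem_setOf_eq, Finset.coe_filter, Finset.mem_image, Finset.mem_range]
    constructor
    · rintro ⟨h1, h2⟩
      have h3 : a ≤ a^2 := Nat.le_self_pow (by omega) a
      exact ⟨⟨a - 1, by omega, by omega⟩, h2⟩
    · rintro ⟨⟨j, hj, rfl⟩, h2⟩
      exact ⟨by omega, h2⟩
  rw [c₁, hset, Set.ncard_coe_finset, Finset.card_filter,
    Finset.sum_image (fun a _ b _ h => by omega)]
  push_cast
  rfl

lemma hc2 (n : ℕ) (hn : 0 < n) :
    (c₂ n : ℤ) = ∑ j ∈ Finset.range (2*n), ∑ i ∈ Finset.range (2*n),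
      (if (j+1)^2 + (i+1)^2 = n then 1 else 0) := by
  have hset : {x : ℕ × ℕ | 0 < x.1 ∧ 0 < x.2 ∧ x.1 ^ 2 + x.2 ^ 2 = n}
      = ↑(((((Finset.range (2*n)).image (fun j => j+1))) ×ˢ
          (((Finset.range (2*n)).image (fun j => j+1)))).filter
          (fun x => x.1^2 + x.2^2 = n)) := by
    ext ⟨a, b⟩
    simp only [Set.mem_setOf_eq, Finset.coe_filter, Finset.mem_product, Finset.mem_image,
      Finset.mem_range]
    constructor
    · rintro ⟨h1, h2, h3⟩
      have h4 : a ≤ a^2 := Nat.le_self_pow (by omega) a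
      have h5 : b ≤ b^2 := Nat.le_self_pow (by omega) b
      exact ⟨⟨⟨a - 1, by omega, by omega⟩, ⟨b - 1, by omega, by omega⟩⟩, h3⟩
    · rintro ⟨⟨⟨j, hj, rfl⟩, ⟨i, hi, rfl⟩⟩, h3⟩
      exact ⟨by omega, by omega, h3⟩
  rw [c₂, hset, Set.ncard_coe_finset, Finset.card_filter, Finset.sum_product]
  rw [Finset.sum_image (fun a _ b _ h => by omega)]
  have : ∀ j ∈ Finset.range (2*n), ∑ x ∈ ((Finset.range (2*n)).image (fun j => j+1)),
        (if (j+1)^2 + x^2 = n then 1 else 0)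
      = ∑ i ∈ Finset.range (2*n), (if (j+1)^2 + (i+1)^2 = n then 1 else 0) :=
    fun j _ => Finset.sum_image (fun a _ b _ h => by omega)
  rw [Finset.sum_congr rfl this]
  push_cast
  rfl

theorem main_mod : ∀ n : ℕ, 0 < n →
    (overpartition n : ℤ) ≡ (-1)^n * (-2 * (c₁ n : ℤ) + 4 * (c₂ n : ℤ)) [ZMOD 8] := by
  intro n
  induction n using Nat.strong_induction_on with
  | _ n IH =>
  intro hn
  rw [Int.modEq_iff_dvd]
  have hrec := recurrence n hn
  set A := ∑ j ∈ Finset.range (2*n), ((-1:ℤ))^(j+1)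
      * (if (j+1)^2 ≤ n then (overpartition (n - (j+1)^2) : ℤ) else 0) with hA
  set B := ∑ j ∈ Finset.range (2*n), ((-1:ℤ))^(j+1)
      * (if (j+1)^2 ≤ n then ((if n = (j+1)^2 then 1 else 0) + 2*(c₁ (n - (j+1)^2) : ℤ)) else 0)
      with hB
  -- 4 ∣ B - A
  have hAB : (4:ℤ) ∣ B - A := by
    rw [hA, hB, ← Finset.sum_sub_distrib]
    apply Finset.dvd_sum
    intro j hj
    rw [← mul_sub]
    apply Dvd.dvd.mul_left _ ((-1)^(j+1))
    by_cases hle : (j+1)^2 ≤ n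
    · rw [if_pos hle, if_pos hle]
      set m := n - (j+1)^2 with hm
      rcases Nat.eq_zero_or_pos m with h0 | hpos
      · rw [h0, if_pos (by omega), op_zero, c1_zero]
        norm_num
      · have hlt : m < n := by
          have : 1 ≤ (j+1)^2 := Nat.one_le_pow 2 (j+1) (by omega)
          omega
        have h8 := (IH m hlt hpos)
        rw [Int.modEq_iff_dvd] at h8
        have hne : ¬ (n = (j+1)^2) := by omega
        rw [if_neg hne]
        -- 4 ∣ (0 + 2*c₁ m) - overpartition m
        rcases Nat.even_or_odd m with he | ho
        · rw [Even.neg_one_pow he] at h8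
          obtain ⟨c, hc⟩ := h8
          obtain ⟨d, hd⟩ : (4:ℤ) ∣ (0 + 2*(c₁ m : ℤ)) - (overpartition m : ℤ) := by omega
          exact ⟨d, hd⟩
        · rw [Odd.neg_one_pow ho] at h8
          obtain ⟨c, hc⟩ := h8
          obtain ⟨d, hd⟩ : (4:ℤ) ∣ (0 + 2*(c₁ m : ℤ)) - (overpartition m : ℤ) := by omega
          exact ⟨d, hd⟩
    · rw [if_neg hle, if_neg hle, sub_self]
      exact dvd_zero _
  -- split B
  set B₁ := ∑ j ∈ Finset.range (2*n), ((-1:ℤ))^(j+1)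
      * (if (j+1)^2 ≤ n then (if n = (j+1)^2 then (1:ℤ) else 0) else 0) with hB₁
  set B₂ := ∑ j ∈ Finset.range (2*n), ((-1:ℤ))^(j+1)
      * (if (j+1)^2 ≤ n then (c₁ (n - (j+1)^2) : ℤ) else 0) with hB₂
  have hsplit : B = B₁ + 2 * B₂ := by
    rw [hB, hB₁, hB₂, Finset.mul_sum, ← Finset.sum_add_distrib]
    refine Finset.sum_congr rfl fun j hj => ?_
    by_cases hle : (j+1)^2 ≤ n
    · rw [if_pos hle, if_pos hle, if_pos hle]; ring
    · rw [if_neg hle, if_neg hle, if_neg hle]; ring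
  -- B₁ = (-1)^n * c₁ n
  have hB1v : B₁ = (-1)^n * (c₁ n : ℤ) := by
    rw [hB₁, hc1 n hn n le_rfl, Finset.mul_sum]
    refine Finset.sum_congr rfl fun j hj => ?_
    by_cases h : (j+1)^2 = n
    · rw [if_pos (by omega), if_pos (by omega : n = (j+1)^2), if_pos h, mul_one, mul_one]
      apply negOnePow_mod
      have hm2 := Nat.pow_mod (j+1) 2 2
      have h01 : (j+1) % 2 = 0 ∨ (j+1) % 2 = 1 := by omega
      rcases h01 with h01 | h01 <;> rw [h01] at hm2 <;> simp at hm2 <;> omega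
    · rw [if_neg h, mul_zero]
      by_cases hle : (j+1)^2 ≤ n
      · rw [if_pos hle, if_neg (by omega), mul_zero]
      · rw [if_neg hle, mul_zero]
  -- 2 ∣ B₂ - c₂ n
  have hB2v : (2:ℤ) ∣ B₂ - (c₂ n : ℤ) := by
    rw [hB₂, hc2 n hn, ← Finset.sum_sub_distrib]
    apply Finset.dvd_sum
    intro j hj
    have hCj : (if (j+1)^2 ≤ n then (c₁ (n - (j+1)^2) : ℤ) else 0)
        = ∑ i ∈ Finset.range (2*n), (if (j+1)^2 + (i+1)^2 = n then 1 else 0) := by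
      by_cases hle : (j+1)^2 ≤ n
      · rw [if_pos hle, hc1 n hn (n - (j+1)^2) (by omega)]
        refine Finset.sum_congr rfl fun i _ => ?_
        have h1 : (i+1)^2 = n - (j+1)^2 ↔ (j+1)^2 + (i+1)^2 = n := by omega
        simp only [h1]
      · rw [if_neg hle]
        symm
        apply Finset.sum_eq_zero
        intro i _
        rw [if_neg (by omega)]
    rw [hCj, ← sub_one_mul]
    apply Dvd.dvd.mul_right
    rcases Nat.even_or_odd (j+1) with he | ho
    · rw [Even.neg_one_pow he]; norm_num
    · rw [Odd.neg_one_pow ho]; norm_num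
  -- assemble
  obtain ⟨a, ha⟩ := hAB
  obtain ⟨b, hb⟩ := hB2v
  rcases Nat.even_or_odd n with he | ho
  · rw [Even.neg_one_pow he]
    rw [Even.neg_one_pow he] at hB1v
    omega
  · rw [Odd.neg_one_pow ho]
    rw [Odd.neg_one_pow ho] at hB1v
    omega


theorem overpartition_two_adic_mod_eight (n : ℕ) (hn : 0 < n) :
    (overpartition n : ℤ) ≡ (-1) ^ n * (-2 * c₁ n + 4 * c₂ n) [ZMOD 8] := by
  exact main_mod n hn
end
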